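/- arXiv:2008.00981 — 5 statements merged into one kernel-verified Lean document; each statement's English description precedes it below -/
import Mathlib

section
/- Let X be a nonempty set and let H be a reproducing kernel Hilbert space on X whose kernel K is non-vanishing (K(z,w) ≠ 0 for all z,w ∈ X). For a function φ: X → ℂ, one has ‖φ‖_{Mult(H),2} ≤ 1 if and only if either φ is constant of modulus at most 1, or φ maps X into the open unit disc 𝔻 and satisfies δ(φ(z),φ(w)) ≤ δ_H(z,w) for all z,w ∈ X, where δ(u,v) = |(u−v)/(1−v̄u)| is the pseudohyperbolic metric on 𝔻 and δ_H(z,w) = (1 − |K(z,w)|²/(K(z,z)K(w,w)))^{1/2}. -/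
open scoped ComplexConjugate ComplexOrder ENNReal NNReal

noncomputable section

/-- A reproducing kernel Hilbert space of complex-valued functions on `X`,
realized as an abstract Hilbert space `H` together with an injective linear
evaluation map into functions, kernel vectors and the reproducing property.
We include the standing assumption `K(x,x) ≠ 0`. -/
structure RKHSpace (X : Type*) (H : Type*) [NormedAddCommGroup H]
    [InnerProductSpace ℂ H] [CompleteSpace H] where
  eval : H →ₗ[ℂ] (X → ℂ)
  eval_injective : Function.Injective eval
  kvec : X → H
  reproducing : ∀ (f : H) (x : X), eval f x = (inner ℂ (kvec x) f : ℂ)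
  nondeg : ∀ x : X, eval (kvec x) x ≠ 0

/-- `L` is `n`-point positive if all `n × n` matrices sampled from it are
positive semidefinite. -/
def NPointPositive {X : Type*} (n : ℕ) (L : X → X → ℂ) : Prop :=
  ∀ v : Fin n → X, (Matrix.of fun i j : Fin n => L (v i) (v j)).PosSemidef

namespace RKHSpace

variable {X H : Type*} [NormedAddCommGroup H] [InnerProductSpace ℂ H] [CompleteSpace H]

/-- The reproducing kernel `K(z,w)`. -/
def ker (R : RKHSpace X H) (z w : X) : ℂ := R.eval (R.kvec w) z

/-- `φ` is a multiplier of the space. -/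
def IsMultiplier (R : RKHSpace X H) (φ : X → ℂ) : Prop :=
  ∀ f : H, ∃ g : H, R.eval g = fun x => φ x * R.eval f x

/-- The multiplier norm of `φ` (the operator norm of `M_φ`), `∞` if `φ` is
not a multiplier. -/
def multNorm (R : RKHSpace X H) (φ : X → ℂ) : ℝ≥0∞ :=
  ⨅ (C : ℝ≥0) (_ : R.IsMultiplier φ ∧ ∀ f g : H,
      R.eval g = (fun x => φ x * R.eval f x) → ‖g‖ ≤ (C : ℝ) * ‖f‖), (C : ℝ≥0∞)

/-- The `n`-point multiplier norm of `φ`. -/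
def nPointNorm (R : RKHSpace X H) (n : ℕ) (φ : X → ℂ) : ℝ≥0∞ :=
  ⨅ (C : ℝ≥0) (_ : NPointPositive n fun z w =>
      R.ker z w * (((C : ℝ) : ℂ) ^ 2 - φ z * conj (φ w))), (C : ℝ≥0∞)

end RKHSpace

end

noncomputable section

open RKHSpace

namespace TwoPointAux

open Matrix


open Matrix

variable {X H : Type*} [NormedAddCommGroup H] [InnerProductSpace ℂ H] [CompleteSpace H]

lemma ker_inner (R : RKHSpace X H) (z w : X) :
    R.ker z w = (inner ℂ (R.kvec z) (R.kvec w) : ℂ) := R.reproducing _ _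

lemma ker_herm (R : RKHSpace X H) (z w : X) : R.ker w z = conj (R.ker z w) := by
  rw [ker_inner, ker_inner, inner_conj_symm]

lemma ker_diag (R : RKHSpace X H) (z : X) : R.ker z z = ((‖R.kvec z‖ ^ 2 : ℝ) : ℂ) := by
  rw [ker_inner, inner_self_eq_norm_sq_to_K]; norm_cast

lemma ker_diag_re_pos (R : RKHSpace X H) (z : X) : 0 < (R.ker z z).re := by
  have hk : R.kvec z ≠ 0 := fun h => R.nondeg z (by simp [h])
  have : (R.ker z z).re = ‖R.kvec z‖ ^ 2 := by rw [ker_diag]; norm_cast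
  rw [this]
  exact pow_pos (norm_pos_iff.2 hk) 2

lemma ker_cs (R : RKHSpace X H) (z w : X) :
    ‖R.ker z w‖ ^ 2 ≤ (R.ker z z).re * (R.ker w w).re := by
  have h := norm_inner_le_norm (𝕜 := ℂ) (R.kvec z) (R.kvec w)
  rw [← ker_inner] at h
  have h1 : (R.ker z z).re = ‖R.kvec z‖ ^ 2 := by rw [ker_diag]; norm_cast
  have h2 : (R.ker w w).re = ‖R.kvec w‖ ^ 2 := by rw [ker_diag]; norm_cast
  rw [h1, h2]
  calc ‖R.ker z w‖ ^ 2 ≤ (‖R.kvec z‖ * ‖R.kvec w‖) ^ 2 := by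
        apply pow_le_pow_left₀ (norm_nonneg _) h
    _ = ‖R.kvec z‖ ^ 2 * ‖R.kvec w‖ ^ 2 := by ring

/-- The Gram matrices of the kernel are positive semidefinite. -/
lemma gram_psd (R : RKHSpace X H) {n : ℕ} (v : Fin n → X) :
    (Matrix.of fun i j : Fin n => R.ker (v i) (v j)).PosSemidef := by
  rw [Matrix.posSemidef_iff_dotProduct_mulVec]
  constructor
  · ext i j
    simp only [Matrix.conjTranspose_apply, Matrix.of_apply, RCLike.star_def]
    exact (ker_herm R (v j) (v i)).symm
  · intro x
    have key : (star x) ⬝ᵥ ((Matrix.of fun i j : Fin n => R.ker (v i) (v j)) *ᵥ x)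
        = ((‖∑ i, x i • R.kvec (v i)‖ ^ 2 : ℝ) : ℂ) := by
      have : ((‖∑ i, x i • R.kvec (v i)‖ ^ 2 : ℝ) : ℂ)
          = (inner ℂ (∑ i, x i • R.kvec (v i)) (∑ i, x i • R.kvec (v i)) : ℂ) := by
        rw [inner_self_eq_norm_sq_to_K]; norm_cast
      rw [this]
      simp only [dotProduct, Matrix.mulVec, dotProduct, Matrix.of_apply,
        Pi.star_apply, sum_inner, inner_sum, inner_smul_left, inner_smul_right, ← ker_inner]
      simp only [Finset.mul_sum]
      conv_rhs => rw [Finset.sum_comm]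
      refine Finset.sum_congr rfl fun i _ => Finset.sum_congr rfl fun j _ => ?_
      simp only [RCLike.star_def]
      ring
    rw [key]
    exact Complex.zero_le_real.2 (by positivity)



lemma qf2 (M : Matrix (Fin 2) (Fin 2) ℂ) (x : Fin 2 → ℂ) :
    dotProduct (star x) (M *ᵥ x) =
      conj (x 0) * (M 0 0 * x 0 + M 0 1 * x 1) + conj (x 1) * (M 1 0 * x 0 + M 1 1 * x 1) := by
  simp [dotProduct, Matrix.mulVec, Fin.sum_univ_two, RCLike.star_def]

lemma diag_real {X : Type*} (L : X → X → ℂ) (hherm : ∀ z w : X, L w z = conj (L z w))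
    (z : X) : L z z = (((L z z).re : ℝ) : ℂ) := by
  have him : (L z z).im = 0 := Complex.conj_eq_iff_im.1 (hherm z z).symm
  exact Complex.ext (by simp) (by simp [him])

lemma psd_two_iff {X : Type*} (L : X → X → ℂ) (hherm : ∀ z w : X, L w z = conj (L z w)) :
    NPointPositive 2 L ↔ ∀ z w : X,
      0 ≤ (L z z).re ∧ ‖L z w‖ ^ 2 ≤ (L z z).re * (L w w).re := by
  have hdiag : ∀ z, (L z z) = (((L z z).re : ℝ) : ℂ) := diag_real L hherm
  constructor
  · intro h z w
    have hq := (h ![z, w]).dotProduct_mulVec_nonneg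
    -- diagonal nonnegativity at z and at w
    have ha : 0 ≤ (L z z).re := by
      have h1 := hq ![1, 0]
      rw [qf2] at h1
      simp only [Matrix.cons_val_zero, Matrix.cons_val_one, Matrix.head_cons,
        Matrix.of_apply, _root_.map_one, _root_.map_zero, mul_zero, zero_mul, add_zero, mul_one,
        one_mul, zero_add] at h1
      simpa using (Complex.le_def.1 h1).1
    have hd : 0 ≤ (L w w).re := by
      have h1 := hq ![0, 1]
      rw [qf2] at h1
      simp only [Matrix.cons_val_zero, Matrix.cons_val_one, Matrix.head_cons,
        Matrix.of_apply, _root_.map_one, _root_.map_zero, mul_zero, zero_mul, add_zero, mul_one,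
        one_mul, zero_add] at h1
      simpa using (Complex.le_def.1 h1).1
    refine ⟨ha, ?_⟩
    set ar := (L z z).re with har
    set dr := (L w w).re with hdr
    set b := L z w with hb
    rcases eq_or_lt_of_le hd with hd0 | hdpos
    · -- dr = 0 : show b = 0
      have hbz : b = 0 := by
        by_contra hbne
        set s : ℝ := 1 / (ar + 1) with hs
        have hspos : 0 < s := by rw [hs]; positivity
        have h3 := hq ![-(s : ℂ) * b, 1]
        rw [qf2] at h3
        simp only [Matrix.cons_val_zero, Matrix.cons_val_one, Matrix.head_cons,
          Matrix.of_apply] at h3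
        have key : conj (-(s : ℂ) * b) * (L z z * (-(s : ℂ) * b) + L z w * 1) +
            conj (1 : ℂ) * (L w z * (-(s : ℂ) * b) + L w w * 1)
            = ((ar * s ^ 2 * Complex.normSq b - 2 * s * Complex.normSq b + dr : ℝ) : ℂ) := by
          rw [hdiag z, hdiag w, hherm z w, ← har, ← hdr, ← hb]
          apply Complex.ext <;>
            simp [Complex.normSq_apply, Complex.mul_re, Complex.mul_im, pow_two] <;> ring
        rw [key] at h3
        have h4 : 0 ≤ ar * s ^ 2 * Complex.normSq b - 2 * s * Complex.normSq b + dr :=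
          Complex.zero_le_real.1 h3
        have hnb : 0 < Complex.normSq b := Complex.normSq_pos.2 hbne
        have hars : ar * s < 2 := by
          have : ar * s ≤ 1 := by
            rw [hs, mul_one_div]
            exact div_le_one_of_le₀ (by linarith) (by linarith)
          linarith
        nlinarith [mul_pos hspos hnb, mul_pos (mul_pos hspos hspos) hnb]
      rw [hbz]
      simp [← hd0]
    · -- dr > 0
      have h2 := hq ![(dr : ℂ), -conj b]
      rw [qf2] at h2
      simp only [Matrix.cons_val_zero, Matrix.cons_val_one, Matrix.head_cons,
        Matrix.of_apply] at h2
      have key : conj ((dr : ℝ) : ℂ) * (L z z * (dr : ℂ) + L z w * (-conj b)) +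
          conj (-conj b) * (L w z * (dr : ℂ) + L w w * (-conj b))
          = ((dr * (ar * dr - Complex.normSq b) : ℝ) : ℂ) := by
        rw [hdiag z, hdiag w, hherm z w, ← har, ← hdr, ← hb]
        apply Complex.ext <;>
          simp [Complex.normSq_apply, Complex.mul_re, Complex.mul_im, pow_two] <;> ring
      rw [key] at h2
      have h4 : 0 ≤ dr * (ar * dr - Complex.normSq b) := Complex.zero_le_real.1 h2
      have h5 : Complex.normSq b ≤ ar * dr := by nlinarith
      rw [Complex.sq_norm]
      exact h5
  · intro h v
    rw [Matrix.posSemidef_iff_dotProduct_mulVec]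
    constructor
    · ext i j
      simp only [Matrix.conjTranspose_apply, Matrix.of_apply, RCLike.star_def]
      exact (hherm (v j) (v i)).symm
    · intro x
      rw [qf2]
      simp only [Matrix.of_apply]
      set z := v 0 with hz
      set w := v 1 with hw
      obtain ⟨ha, hzw⟩ := h z w
      obtain ⟨hd, -⟩ := h w w
      set ar := (L z z).re with har
      set dr := (L w w).re with hdr
      set b := L z w with hb
      set t := b * conj (x 0) * x 1 with ht
      have key : conj (x 0) * (L z z * x 0 + L z w * x 1) +
          conj (x 1) * (L w z * x 0 + L w w * x 1)
          = ((ar * Complex.normSq (x 0) + 2 * t.re + dr * Complex.normSq (x 1) : ℝ) : ℂ) := by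
        rw [hdiag z, hdiag w, hherm z w, ← har, ← hdr, ← hb, ht]
        apply Complex.ext <;>
          simp [Complex.normSq_apply, Complex.mul_re, Complex.mul_im, pow_two] <;> ring
      rw [key]
      apply Complex.zero_le_real.2
      set p := ‖x 0‖ with hp
      set q := ‖x 1‖ with hq'
      have hp0 : 0 ≤ p := norm_nonneg _
      have hq0 : 0 ≤ q := norm_nonneg _
      have hnx0 : Complex.normSq (x 0) = p ^ 2 := (Complex.sq_norm _).symm
      have hnx1 : Complex.normSq (x 1) = q ^ 2 := (Complex.sq_norm _).symm
      have habst : ‖t‖ = ‖b‖ * p * q := by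
        rw [ht, norm_mul, norm_mul, Complex.norm_conj]
      have htre : -(‖b‖ * p * q) ≤ t.re := by
        rw [← habst]
        exact (abs_le.1 (Complex.abs_re_le_norm t)).1
      have hsq : ‖b‖ ≤ Real.sqrt ar * Real.sqrt dr := by
        rw [← Real.sqrt_mul ha]
        exact (Real.le_sqrt (norm_nonneg _) (by positivity)).2 hzw
      have hmul : ‖b‖ * (p * q) ≤ Real.sqrt ar * Real.sqrt dr * (p * q) :=
        mul_le_mul_of_nonneg_right hsq (by positivity)
      rw [hnx0, hnx1]
      nlinarith [sq_nonneg (Real.sqrt ar * p - Real.sqrt dr * q), Real.sq_sqrt ha,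
        Real.sq_sqrt hd, Real.sqrt_nonneg ar, Real.sqrt_nonneg dr]



lemma normSq_one_sub_mul (u v : ℂ) :
    Complex.normSq (1 - u * conj v) =
      Complex.normSq (u - v) + (1 - Complex.normSq u) * (1 - Complex.normSq v) := by
  simp only [Complex.normSq_apply, Complex.sub_re, Complex.sub_im, Complex.one_re,
    Complex.one_im, Complex.mul_re, Complex.mul_im, Complex.conj_re, Complex.conj_im]
  ring

lemma metric_iff (u v : ℂ) (hu : ‖u‖ < 1) (hv : ‖v‖ < 1)
    {Bv P : ℝ} (hB : 0 ≤ Bv) (hP : 0 < P) (hBP : Bv ^ 2 ≤ P) :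
    ‖(u - v) / (1 - conj v * u)‖ ≤ Real.sqrt (1 - Bv ^ 2 / P) ↔
      Bv ^ 2 * ‖1 - u * conj v‖ ^ 2 ≤
        P * ((1 - Complex.normSq u) * (1 - Complex.normSq v)) := by
  have hE : (1 - conj v * u) = 1 - u * conj v := by ring
  have hDabs : ‖u * conj v‖ < 1 := by
    rw [norm_mul, Complex.norm_conj]
    nlinarith [norm_nonneg u, norm_nonneg v]
  have hD : (1 : ℂ) - u * conj v ≠ 0 := by
    intro h
    have : (1 : ℂ) = u * conj v := by linear_combination h
    rw [← this] at hDabs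
    simp at hDabs
  have hnD : 0 < Complex.normSq (1 - u * conj v) := Complex.normSq_pos.2 hD
  have ht : 0 ≤ 1 - Bv ^ 2 / P := by
    rw [sub_nonneg, div_le_one hP]
    exact hBP
  have hid : Complex.normSq (u - v)
      = Complex.normSq (1 - u * conj v) - (1 - Complex.normSq u) * (1 - Complex.normSq v) := by
    rw [normSq_one_sub_mul]; ring
  rw [hE, Real.le_sqrt (norm_nonneg _) ht, norm_div, div_pow,
    Complex.sq_norm (u - v), Complex.sq_norm (1 - u * conj v), hid, sub_div,
    div_self (ne_of_gt hnD), sub_le_sub_iff_left, div_le_div_iff₀ hP hnD]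
  constructor <;> intro h <;> linarith [h]



open Matrix

variable {X H : Type*} [NormedAddCommGroup H] [InnerProductSpace ℂ H] [CompleteSpace H]


/-- The kernel appearing in the `n`-point norm at level `C`. -/
def Lk (R : RKHSpace X H) (φ : X → ℂ) (C : ℝ≥0) : X → X → ℂ :=
  fun z w => R.ker z w * (((C : ℝ) : ℂ) ^ 2 - φ z * conj (φ w))

lemma Lk_herm (R : RKHSpace X H) (φ : X → ℂ) (C : ℝ≥0) (z w : X) :
    Lk R φ C w z = conj (Lk R φ C z w) := by
  simp only [Lk, _root_.map_mul, map_sub, map_pow, Complex.conj_ofReal, Complex.conj_conj, ← ker_herm R z w]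
  ring

lemma Lk_decomp (R : RKHSpace X H) (φ : X → ℂ) (C C' : ℝ≥0) {n : ℕ} (v : Fin n → X) :
    (Matrix.of fun i j : Fin n => Lk R φ C' (v i) (v j)) =
      (Matrix.of fun i j : Fin n => Lk R φ C (v i) (v j)) +
        ((((C' : ℝ) ^ 2 - (C : ℝ) ^ 2 : ℝ)) : ℂ) •
          (Matrix.of fun i j : Fin n => R.ker (v i) (v j)) := by
  ext i j
  simp only [Lk, Matrix.add_apply, Matrix.smul_apply, Matrix.of_apply, smul_eq_mul]
  push_cast
  ring

lemma Lk_mono (R : RKHSpace X H) (φ : X → ℂ) {C C' : ℝ≥0} (hle : C ≤ C')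
    (hP : NPointPositive 2 (Lk R φ C)) : NPointPositive 2 (Lk R φ C') := by
  intro v
  have hgram := gram_psd R v
  rw [Lk_decomp R φ C C' v]
  refine (hP v).add ?_
  have hc : (0 : ℝ) ≤ (C' : ℝ) ^ 2 - (C : ℝ) ^ 2 := by
    have h1 : (C : ℝ) ≤ (C' : ℝ) := hle
    nlinarith [C.coe_nonneg]
  rw [Matrix.posSemidef_iff_dotProduct_mulVec]
  constructor
  · rw [Matrix.IsHermitian, Matrix.conjTranspose_smul, hgram.1]
    congr 1
    rw [RCLike.star_def, Complex.conj_ofReal]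
  · intro x
    rw [Matrix.smul_mulVec, dotProduct_smul, smul_eq_mul]
    exact mul_nonneg (Complex.zero_le_real.2 hc) (hgram.dotProduct_mulVec_nonneg x)

lemma Lk_closed (R : RKHSpace X H) (φ : X → ℂ)
    (h : ∀ ε : ℝ≥0, 0 < ε → NPointPositive 2 (Lk R φ (1 + ε))) :
    NPointPositive 2 (Lk R φ 1) := by
  intro v
  rw [Matrix.posSemidef_iff_dotProduct_mulVec]
  constructor
  · ext i j
    simp only [Matrix.conjTranspose_apply, Matrix.of_apply, RCLike.star_def]
    exact (Lk_herm R φ 1 (v j) (v i)).symm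
  · intro x
    set g : ℂ := dotProduct (star x)
      ((Matrix.of fun i j : Fin 2 => R.ker (v i) (v j)) *ᵥ x) with hg
    have hgnn : 0 ≤ g := (gram_psd R v).dotProduct_mulVec_nonneg x
    obtain ⟨hgre, hgim⟩ := Complex.nonneg_iff.1 hgnn
    set q1 : ℂ := dotProduct (star x)
      ((Matrix.of fun i j : Fin 2 => Lk R φ 1 (v i) (v j)) *ᵥ x) with hq1
    have hdec : ∀ ε : ℝ≥0,
        dotProduct (star x)
          ((Matrix.of fun i j : Fin 2 => Lk R φ (1 + ε) (v i) (v j)) *ᵥ x)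
          = q1 + ((((1 + ε : ℝ≥0) : ℝ) ^ 2 - 1 : ℝ) : ℂ) * g := by
      intro ε
      rw [Lk_decomp R φ 1 (1 + ε) v]
      rw [Matrix.add_mulVec, dotProduct_add, Matrix.smul_mulVec,
        dotProduct_smul, smul_eq_mul, ← hq1, ← hg]
      norm_num
    have hq' : ∀ ε : ℝ≥0, 0 < ε →
        0 ≤ q1 + ((((1 + ε : ℝ≥0) : ℝ) ^ 2 - 1 : ℝ) : ℂ) * g := by
      intro ε hε
      rw [← hdec ε]
      exact (h ε hε v).dotProduct_mulVec_nonneg x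
    -- imaginary part of q1 vanishes
    have him : q1.im = 0 := by
      have h1 := hq' 1 one_pos
      obtain ⟨-, h2⟩ := Complex.nonneg_iff.1 h1
      have h3 : (q1 + ((((1 + 1 : ℝ≥0) : ℝ) ^ 2 - 1 : ℝ) : ℂ) * g).im
          = q1.im + (((1 + 1 : ℝ≥0) : ℝ) ^ 2 - 1) * g.im := by
        rw [Complex.add_im, Complex.im_ofReal_mul]
      rw [← h2, ← hgim, mul_zero, add_zero] at h3
      exact h3.symm
    have hre : 0 ≤ q1.re := by
      by_contra hneg
      push_neg at hneg
      set e : ℝ := min 1 ((-q1.re) / (3 * (g.re + 1))) with he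
      have hepos : 0 < e := by
        apply lt_min one_pos
        apply div_pos (by linarith) (by linarith)
      set ε : ℝ≥0 := Real.toNNReal e with hε
      have hεpos : 0 < ε := Real.toNNReal_pos.2 hepos
      have hcoe : (ε : ℝ) = e := Real.coe_toNNReal e hepos.le
      have h1 := hq' ε hεpos
      obtain ⟨h2, -⟩ := Complex.nonneg_iff.1 h1
      have h3 : (q1 + ((((1 + ε : ℝ≥0) : ℝ) ^ 2 - 1 : ℝ) : ℂ) * g).re
          = q1.re + (((1 + ε : ℝ≥0) : ℝ) ^ 2 - 1) * g.re := by
        rw [Complex.add_re, Complex.re_ofReal_mul]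
      rw [h3] at h2
      have hpush : ((1 + ε : ℝ≥0) : ℝ) = 1 + e := by
        push_cast [hcoe]
        ring
      rw [hpush] at h2
      have he1 : e ≤ 1 := min_le_left _ _
      have he2 : e ≤ (-q1.re) / (3 * (g.re + 1)) := min_le_right _ _
      have he3 : e * (3 * (g.re + 1)) ≤ -q1.re := by
        rw [← le_div_iff₀ (by linarith)]
        exact he2
      nlinarith [mul_nonneg hepos.le hgre, mul_nonneg (mul_nonneg hepos.le hepos.le) hgre,
        mul_pos hepos (show (0:ℝ) < 1 by norm_num)]
    exact Complex.nonneg_iff.2 ⟨hre, him.symm⟩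

lemma step1 (R : RKHSpace X H) (φ : X → ℂ) :
    R.nPointNorm 2 φ ≤ 1 ↔ NPointPositive 2 (Lk R φ 1) := by
  have hdef : R.nPointNorm 2 φ
      = ⨅ (C : ℝ≥0) (_ : NPointPositive 2 (Lk R φ C)), (C : ℝ≥0∞) := rfl
  constructor
  · intro hle
    apply Lk_closed
    intro ε hε
    have hlt : R.nPointNorm 2 φ < ((1 + ε : ℝ≥0) : ℝ≥0∞) := by
      refine lt_of_le_of_lt hle ?_
      rw [show ((1:ℝ≥0∞)) = ((1 : ℝ≥0) : ℝ≥0∞) by norm_num]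
      exact_mod_cast (by simp [hε] : (1 : ℝ≥0) < 1 + ε)
    rw [hdef] at hlt
    obtain ⟨C, hC⟩ := iInf_lt_iff.1 hlt
    obtain ⟨hPC, hClt⟩ := iInf_lt_iff.1 hC
    exact Lk_mono R φ (le_of_lt (by exact_mod_cast hClt)) hPC
  · intro hQ
    rw [hdef]
    refine le_trans (iInf_le_of_le 1 (iInf_le_of_le hQ le_rfl)) ?_
    norm_num

end TwoPointAux

/-- characterization of the two-point multiplier norm being at most one
in terms of the pseudohyperbolic metric. -/
theorem twoPointNorm_le_one_iff
    {X H : Type*} [Nonempty X] [NormedAddCommGroup H] [InnerProductSpace ℂ H]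
    [CompleteSpace H] (R : RKHSpace X H) (hK : ∀ z w : X, R.ker z w ≠ 0)
    (φ : X → ℂ) :
    R.nPointNorm 2 φ ≤ 1 ↔
      ((∃ c : ℂ, ‖c‖ ≤ 1 ∧ φ = fun _ => c) ∨
        ((∀ x : X, ‖φ x‖ < 1) ∧
          ∀ z w : X,
            ‖(φ z - φ w) / (1 - conj (φ w) * φ z)‖ ≤
              Real.sqrt (1 - ‖R.ker z w‖ ^ 2 /
                ((R.ker z z).re * (R.ker w w).re)))) := by
  classical
  rw [TwoPointAux.step1 R φ,
    TwoPointAux.psd_two_iff (TwoPointAux.Lk R φ 1) (TwoPointAux.Lk_herm R φ 1)]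
  have hApos : ∀ z : X, 0 < (R.ker z z).re := TwoPointAux.ker_diag_re_pos R
  have hkzz : ∀ z : X, R.ker z z = (((R.ker z z).re : ℝ) : ℂ) := by
    intro z
    have him : (R.ker z z).im = 0 := by rw [TwoPointAux.ker_diag]; exact Complex.ofReal_im _
    exact Complex.ext (by simp) (by simp [him])
  have hLone : ∀ z w : X, TwoPointAux.Lk R φ 1 z w
      = R.ker z w * (1 - φ z * conj (φ w)) := by
    intro z w; simp [TwoPointAux.Lk]
  have hdiagre : ∀ z : X, (TwoPointAux.Lk R φ 1 z z).re
      = (R.ker z z).re * (1 - Complex.normSq (φ z)) := by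
    intro z
    rw [hLone z z, Complex.mul_conj]
    conv_lhs => rw [hkzz z]
    rw [← Complex.ofReal_one, ← Complex.ofReal_sub, ← Complex.ofReal_mul, Complex.ofReal_re]
  have habs : ∀ z w : X, ‖TwoPointAux.Lk R φ 1 z w‖ ^ 2
      = ‖R.ker z w‖ ^ 2 * ‖1 - φ z * conj (φ w)‖ ^ 2 := by
    intro z w; rw [hLone z w, norm_mul, mul_pow]
  constructor
  · intro hcrit
    have hle1 : ∀ z : X, Complex.normSq (φ z) ≤ 1 := by
      intro z
      have h1 := (hcrit z z).1
      rw [hdiagre] at h1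
      nlinarith [hApos z]
    by_cases hex : ∃ x0 : X, ‖φ x0‖ = 1
    · obtain ⟨x0, hx0⟩ := hex
      left
      refine ⟨φ x0, le_of_eq hx0, funext fun z => ?_⟩
      have hstar := (hcrit z x0).2
      rw [habs, hdiagre, hdiagre] at hstar
      have hnx0 : Complex.normSq (φ x0) = 1 := by rw [← Complex.sq_norm, hx0]; norm_num
      rw [hnx0] at hstar
      have hBpos : 0 < ‖R.ker z x0‖ ^ 2 := pow_pos (norm_pos_iff.2 (hK z x0)) 2
      have h0 : ‖1 - φ z * conj (φ x0)‖ ^ 2 ≤ 0 := by nlinarith [hstar]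
      have h00 : ‖1 - φ z * conj (φ x0)‖ ^ 2 = 0 := le_antisymm h0 (sq_nonneg _)
      have habs0 : (1 : ℂ) - φ z * conj (φ x0) = 0 :=
        norm_eq_zero.1 ((pow_eq_zero_iff two_ne_zero).1 h00)
      have hD : φ z * conj (φ x0) = 1 := by linear_combination -habs0
      have hx0c : φ x0 * conj (φ x0) = 1 := by
        rw [Complex.mul_conj, hnx0]; norm_num
      have hc0 : conj (φ x0) ≠ 0 := by
        intro h; rw [h, mul_zero] at hD; exact zero_ne_one hD
      exact mul_right_cancel₀ hc0 (hD.trans hx0c.symm)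
    · right
      push_neg at hex
      have hlt : ∀ x : X, ‖φ x‖ < 1 := by
        intro x
        rcases lt_or_eq_of_le (show ‖φ x‖ ≤ 1 by
          nlinarith [hle1 x, Complex.sq_norm (φ x), norm_nonneg (φ x)]) with h | h
        · exact h
        · exact absurd h (hex x)
      refine ⟨hlt, fun z w => ?_⟩
      refine (TwoPointAux.metric_iff (φ z) (φ w) (hlt z) (hlt w) (norm_nonneg _)
        (mul_pos (hApos z) (hApos w)) (TwoPointAux.ker_cs R z w)).2 ?_
      have hstar := (hcrit z w).2
      rw [habs, hdiagre, hdiagre] at hstar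
      nlinarith [hstar]
  · intro hrhs z w
    rcases hrhs with ⟨c, hc1, hcφ⟩ | ⟨hlt, hm⟩
    · have hφ : ∀ x : X, φ x = c := fun x => by rw [hcφ]
      have hnc : Complex.normSq c ≤ 1 := by
        nlinarith [Complex.sq_norm c, norm_nonneg c]
      constructor
      · rw [hdiagre, hφ z]
        exact mul_nonneg (hApos z).le (by linarith)
      · rw [habs, hdiagre, hdiagre, hφ z, hφ w]
        have habc : ‖1 - c * conj c‖ = 1 - Complex.normSq c := by
          rw [Complex.mul_conj, ← Complex.ofReal_one, ← Complex.ofReal_sub,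
            Complex.norm_real, Real.norm_eq_abs]
          exact abs_of_nonneg (by linarith)
        rw [habc]
        nlinarith [TwoPointAux.ker_cs R z w, sq_nonneg (1 - Complex.normSq c),
          norm_nonneg (R.ker z w)]
    · have hnz : ∀ x : X, Complex.normSq (φ x) < 1 := fun x => by
        nlinarith [Complex.sq_norm (φ x), norm_nonneg (φ x), hlt x]
      constructor
      · rw [hdiagre]
        exact mul_nonneg (hApos z).le (by linarith [hnz z])
      · rw [habs, hdiagre, hdiagre]
        have h1 := (TwoPointAux.metric_iff (φ z) (φ w) (hlt z) (hlt w)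
          (norm_nonneg _) (mul_pos (hApos z) (hApos w))
          (TwoPointAux.ker_cs R z w)).1 (hm z w)
        nlinarith [h1]

end
end

section
/- Let H be a reproducing kernel Hilbert space of analytic functions on an open domain Ω ⊂ ℂ^d. Then every function φ: Ω → ℂ with ‖φ‖_{Mult(H),3} < ∞ is analytic on Ω. (This generalizes Hindmarsh's theorem, which is the case of the Hardy space H² on 𝔻.) -/
open scoped ComplexConjugate ComplexOrder ENNReal NNReal

noncomputable section

/-- A reproducing kernel Hilbert space of complex-valued functions on `X`,
realized as an abstract Hilbert space `H` together with an injective linear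
evaluation map into functions, kernel vectors and the reproducing property.
We include the standing assumption `K(x,x) ≠ 0`. -/
structure RKHS' (X : Type*) (H : Type*) [NormedAddCommGroup H]
    [InnerProductSpace ℂ H] [CompleteSpace H] where
  eval : H →ₗ[ℂ] (X → ℂ)
  eval_injective : Function.Injective eval
  kvec : X → H
  reproducing : ∀ (f : H) (x : X), eval f x = (inner ℂ (kvec x) f : ℂ)
  nondeg : ∀ x : X, eval (kvec x) x ≠ 0

namespace RKHS'

variable {X H : Type*} [NormedAddCommGroup H] [InnerProductSpace ℂ H] [CompleteSpace H]

/-- The reproducing kernel `K(z,w)`. -/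
def ker (R : RKHS' X H) (z w : X) : ℂ := R.eval (R.kvec w) z

/-- `φ` is a multiplier of the space. -/
def IsMultiplier (R : RKHS' X H) (φ : X → ℂ) : Prop :=
  ∀ f : H, ∃ g : H, R.eval g = fun x => φ x * R.eval f x

/-- The multiplier norm of `φ` (the operator norm of `M_φ`), `∞` if `φ` is
not a multiplier. -/
def multNorm (R : RKHS' X H) (φ : X → ℂ) : ℝ≥0∞ :=
  ⨅ (C : ℝ≥0) (_ : R.IsMultiplier φ ∧ ∀ f g : H,
      R.eval g = (fun x => φ x * R.eval f x) → ‖g‖ ≤ (C : ℝ) * ‖f‖), (C : ℝ≥0∞)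

/-- The `n`-point multiplier norm of `φ`. -/
def nPointNorm (R : RKHS' X H) (n : ℕ) (φ : X → ℂ) : ℝ≥0∞ :=
  ⨅ (C : ℝ≥0) (_ : NPointPositive n fun z w =>
      R.ker z w * (((C : ℝ) : ℂ) ^ 2 - φ z * conj (φ w))), (C : ℝ≥0∞)

end RKHS'

end

noncomputable section

open RKHS'

/-- Extension of a function on a subset to the ambient space (by junk values). -/
def extFn {E : Type*} (Ω : Set E) (φ : ↥Ω → ℂ) : E → ℂ :=
  Function.extend Subtype.val φ fun _ => 0

open Metric Set Filter Topology Finset Matrix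

/-! ### Auxiliary lemmas -/

private lemma hindmarsh_habs1 (u v s τ : ℂ) (hτ : τ ≠ 0) :
    u * τ - v * s = τ * (u - v/τ * s) := by
  field_simp

private lemma hindmarsh_habs2 (u v τ σ : ℂ) (hτ : τ ≠ 0) (hσ : σ ≠ 0) :
    u * σ - v * τ = τ * σ * (u/τ - v/σ) := by
  field_simp

private lemma hindmarsh_le_zero {a c ε₀ : ℝ} (hε₀ : 0 < ε₀) (hc : 0 ≤ c)
    (h : ∀ ε : ℝ, 0 < ε → ε < ε₀ → a ≤ c * ε) : a ≤ 0 := by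
  by_contra hp
  push_neg at hp
  have hε : 0 < min (ε₀/2) (a/(c+1)) := lt_min (by linarith) (by positivity)
  have h1 := h _ hε (lt_of_le_of_lt (min_le_left _ _) (by linarith))
  have h2 : min (ε₀/2) (a/(c+1)) ≤ a/(c+1) := min_le_right _ _
  have h3 : c * min (ε₀/2) (a/(c+1)) ≤ c * (a/(c+1)) := by
    apply mul_le_mul_of_nonneg_left h2 hc
  have h4 : c * (a/(c+1)) < a := by
    rw [mul_div_assoc'] at *
    rw [div_lt_iff₀ (by linarith : (0:ℝ) < c+1)]
    nlinarith
  linarith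

/-- Second divided difference bound for bounded holomorphic functions on a disc. -/
private lemma hindmarsh_dd2 {g : ℂ → ℂ} {R M : ℝ} (hR : 0 < R)
    (hd : DifferentiableOn ℂ g (ball (0:ℂ) R))
    (hb : ∀ x ∈ ball (0:ℂ) R, ‖g x‖ ≤ M)
    {a b c : ℂ} (ha : a ∈ ball (0:ℂ) (R/4)) (hbb : b ∈ ball (0:ℂ) (R/4))
    (hc : c ∈ ball (0:ℂ) (R/4)) (hab : a ≠ b) (hac : a ≠ c) (hbc : b ≠ c) :
    ‖(g a - g c) * (b - c) - (g b - g c) * (a - c)‖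
      ≤ 64 * M / R ^ 2 * (‖a - c‖ * ‖b - c‖ * ‖a - b‖) := by
  have hnsub : ∀ {y c' : ℂ} {ry rc : ℝ}, ry ≤ ‖y‖ → ‖c'‖ < rc → ry - rc ≤ ‖y - c'‖ := by
    intro y c' ry rc hy hc'
    have := norm_sub_norm_le y c'
    linarith
  have hsub4 : ball (0:ℂ) (R/4) ⊆ ball (0:ℂ) R :=
    ball_subset_ball (by linarith)
  have hsub42 : ball (0:ℂ) (R/4) ⊆ closedBall (0:ℂ) (R/2) :=
    ball_subset_closedBall.trans (closedBall_subset_closedBall (by linarith))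
  have hsub2 : closedBall (0:ℂ) (R/2) ⊆ ball (0:ℂ) R :=
    closedBall_subset_ball (by linarith)
  have hM : 0 ≤ M := le_trans (norm_nonneg _) (hb 0 (mem_ball_self hR))
  have hfr : frontier (ball (0:ℂ) (R/2)) = sphere 0 (R/2) :=
    frontier_ball 0 (by positivity)
  have hclos : closure (ball (0:ℂ) (R/2)) = closedBall 0 (R/2) :=
    closure_ball 0 (by positivity)
  set g₁ : ℂ → ℂ := dslope g c with hg₁def
  have hg₁d : DifferentiableOn ℂ g₁ (ball (0:ℂ) R) :=
    (Complex.differentiableOn_dslope (isOpen_ball.mem_nhds (hsub4 hc))).mpr hd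
  have hg₁bd : ∀ x ∈ closedBall (0:ℂ) (R/2), ‖g₁ x‖ ≤ 8 * M / R := by
    intro x hx
    refine Complex.norm_le_of_forall_mem_frontier_norm_le isBounded_ball
      ((hg₁d.mono (hclos ▸ hsub2)).diffContOnCl) (fun y hy => ?_) (hclos ▸ hx)
    rw [hfr, mem_sphere_zero_iff_norm] at hy
    have hcn := mem_ball_zero_iff.mp hc
    have hyc' : R / 4 ≤ ‖y - c‖ := by
      have := hnsub (le_of_eq hy.symm) hcn; linarith
    have hyc : y ≠ c := by
      intro h; rw [h, sub_self, norm_zero] at hyc'; linarith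
    rw [hg₁def, dslope_of_ne _ hyc, slope_def_field, norm_div]
    have hy' : y ∈ ball (0:ℂ) R := by rw [mem_ball_zero_iff, hy]; linarith
    have h2M : ‖g y - g c‖ ≤ 2 * M := by
      have h1 := hb y hy'; have h2 := hb c (hsub4 hc)
      calc ‖g y - g c‖ ≤ ‖g y‖ + ‖g c‖ := norm_sub_le _ _
        _ ≤ 2 * M := by linarith
    calc ‖g y - g c‖ / ‖y - c‖ ≤ (2*M) / (R/4) :=
          div_le_div₀ (by linarith) h2M (by linarith) hyc'
      _ = 8 * M / R := by field_simp; ring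
  set g₂ : ℂ → ℂ := dslope g₁ a with hg₂def
  have hg₂d : DifferentiableOn ℂ g₂ (ball (0:ℂ) R) :=
    (Complex.differentiableOn_dslope (isOpen_ball.mem_nhds (hsub4 ha))).mpr hg₁d
  have hg₂bd : ‖g₂ b‖ ≤ 64 * M / R ^ 2 := by
    refine Complex.norm_le_of_forall_mem_frontier_norm_le isBounded_ball
      ((hg₂d.mono (hclos ▸ hsub2)).diffContOnCl) (fun y hy => ?_)
      (hclos ▸ hsub42 hbb)
    rw [hfr, mem_sphere_zero_iff_norm] at hy
    have han := mem_ball_zero_iff.mp ha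
    have hya' : R / 4 ≤ ‖y - a‖ := by
      have := hnsub (le_of_eq hy.symm) han; linarith
    have hya : y ≠ a := by
      intro h; rw [h, sub_self, norm_zero] at hya'; linarith
    rw [hg₂def, dslope_of_ne _ hya, slope_def_field, norm_div]
    have hyB : y ∈ closedBall (0:ℂ) (R/2) := by
      rw [mem_closedBall_zero_iff, hy]
    have h2M : ‖g₁ y - g₁ a‖ ≤ 2 * (8 * M / R) := by
      have h1 := hg₁bd y hyB; have h2 := hg₁bd a (hsub42 ha)
      calc ‖g₁ y - g₁ a‖ ≤ ‖g₁ y‖ + ‖g₁ a‖ := norm_sub_le _ _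
        _ ≤ 2 * (8 * M / R) := by linarith
    calc ‖g₁ y - g₁ a‖ / ‖y - a‖ ≤ (2 * (8 * M / R)) / (R/4) :=
          div_le_div₀ (by positivity) h2M (by linarith) hya'
      _ = 64 * M / R ^ 2 := by field_simp; ring
  have hkey : (g a - g c) * (b - c) - (g b - g c) * (a - c)
      = ((a - c) * ((b - c) * (a - b))) * g₂ b := by
    have e2 : g₂ b = ((g b - g c)/(b - c) - (g a - g c)/(a - c)) / (b - a) := by
      rw [hg₂def, dslope_of_ne _ (Ne.symm hab), slope_def_field,
        hg₁def, dslope_of_ne _ hbc, dslope_of_ne _ hac, slope_def_field,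
        slope_def_field]
    rw [e2]
    have h1 : a - c ≠ 0 := sub_ne_zero.mpr hac
    have h2 : b - c ≠ 0 := sub_ne_zero.mpr hbc
    have h3 : b - a ≠ 0 := sub_ne_zero.mpr (Ne.symm hab)
    field_simp
    ring
  rw [hkey, norm_mul, norm_mul, norm_mul]
  calc ‖a - c‖ * (‖b - c‖ * ‖a - b‖) * ‖g₂ b‖
      ≤ ‖a - c‖ * (‖b - c‖ * ‖a - b‖) * (64 * M / R ^ 2) := by
        apply mul_le_mul_of_nonneg_left hg₂bd (by positivity)
    _ = 64 * M / R ^ 2 * (‖a - c‖ * ‖b - c‖ * ‖a - b‖) := by ring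

/-- Existence of a derivative at `0` from a Cauchy property of difference quotients. -/
private lemma hindmarsh_deriv_exists {q : ℂ → ℂ} {β δ : ℝ} (hβ : 0 ≤ β) (hδ : 0 < δ)
    (hq : ∀ s t : ℂ, s ≠ t → s ≠ 0 → t ≠ 0 → ‖s‖ < δ → ‖t‖ < δ →
      ‖(q s - q 0) * t - (q t - q 0) * s‖ ≤ β * (‖s‖ * ‖t‖ * ‖s - t‖)) :
    ∃ L : ℂ, ∀ s : ℂ, ‖s‖ < δ → ‖q s - q 0 - L * s‖ ≤ β * ‖s‖ ^ 2 := by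
  set t : ℕ → ℝ := fun n => δ / 2 / (n + 1) with ht
  have htpos : ∀ n, 0 < t n := fun n => by positivity
  have hcast : ∀ n : ℕ, (1:ℝ) ≤ (n:ℝ) + 1 := by
    intro n; have : (0:ℝ) ≤ (n:ℝ) := Nat.cast_nonneg n; linarith
  have htlt : ∀ n, t n < δ := by
    intro n
    calc δ / 2 / (n+1) ≤ δ / 2 / 1 :=
          div_le_div_of_nonneg_left (by linarith) one_pos (hcast n)
      _ < δ := by linarith
  have htanti : ∀ {n m : ℕ}, n ≤ m → t m ≤ t n := by
    intro n m hnm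
    apply div_le_div_of_nonneg_left (by linarith) (by positivity)
    have : (n:ℝ) ≤ (m:ℝ) := Nat.cast_le.mpr hnm
    linarith
  have htstrict : ∀ {n m : ℕ}, n < m → t m < t n := by
    intro n m hnm
    apply div_lt_div_of_pos_left (by linarith) (by positivity)
    have : (n:ℝ) < (m:ℝ) := Nat.cast_lt.mpr hnm
    linarith
  have htinj : ∀ {n m : ℕ}, t n = t m → n = m := by
    intro n m h
    rcases lt_trichotomy n m with h' | h' | h'
    · exact absurd h (ne_of_gt (htstrict h'))
    · exact h'
    · exact absurd h (ne_of_lt (htstrict h'))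
  have htend : Tendsto t atTop (𝓝 0) := by
    have h1 : Tendsto (fun n : ℕ => 1 / ((n:ℝ) + 1)) atTop (𝓝 0) :=
      tendsto_one_div_add_atTop_nhds_zero_nat
    have h2 : t = fun n : ℕ => (δ/2) * (1 / ((n:ℝ) + 1)) := by
      funext n; rw [ht]; field_simp
    rw [h2]
    simpa using h1.const_mul (δ/2)
  set a : ℕ → ℂ := fun n => (q (t n) - q 0) / (t n) with ha
  have haEq : ∀ n, a n = (q (t n) - q 0) / (t n) := fun n => by rw [ha]
  have htc : ∀ n, ((t n : ℝ) : ℂ) ≠ 0 := fun n =>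
    Complex.ofReal_ne_zero.mpr (ne_of_gt (htpos n))
  have htnorm : ∀ n, ‖((t n : ℝ) : ℂ)‖ = t n := fun n => by
    rw [Complex.norm_real, Real.norm_of_nonneg (le_of_lt (htpos n))]
  have hdq : ∀ {s : ℂ}, s ≠ 0 → ‖s‖ < δ → ∀ n, (t n : ℂ) ≠ s →
      ‖(q s - q 0) - a n * s‖ ≤ β * (‖s‖ * ‖s - t n‖) := by
    intro s hs0 hsδ n hts
    have key := hq s (t n) (Ne.symm hts) hs0 (htc n) hsδ (by rw [htnorm]; exact htlt n)
    rw [hindmarsh_habs1 _ _ _ _ (htc n), ← haEq n, norm_mul, htnorm] at key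
    have key2 : t n * ‖(q s - q 0) - a n * s‖ ≤ t n * (β * (‖s‖ * ‖s - (t n : ℂ)‖)) := by
      refine key.trans (le_of_eq ?_)
      ring
    exact le_of_mul_le_mul_left key2 (htpos n)
  have hcauchy : CauchySeq a := by
    apply cauchySeq_of_le_tendsto_0 (fun n => 2 * β * t n) _ (by
      simpa using (htend.const_mul (2*β)))
    intro n m N hn hm
    rcases eq_or_ne n m with rfl | hnm
    · simp only [dist_self]; positivity
    · have htnm : ((t n : ℝ) : ℂ) ≠ ((t m : ℝ) : ℂ) := by
        intro h; exact hnm (htinj (Complex.ofReal_injective h))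
      have key := hq (t n) (t m) htnm (htc n) (htc m)
        (by rw [htnorm]; exact htlt n) (by rw [htnorm]; exact htlt m)
      rw [hindmarsh_habs2 _ _ _ _ (htc n) (htc m), ← haEq n, ← haEq m] at key
      simp only [norm_mul, htnorm] at key
      have h1 : ‖((t n : ℝ):ℂ) - ((t m : ℝ):ℂ)‖ ≤ 2 * t N := by
        rw [← Complex.ofReal_sub, Complex.norm_real, Real.norm_eq_abs, abs_le]
        have h2 := htanti hn; have h3 := htanti hm
        constructor <;> nlinarith [htpos n, htpos m]
      have key3 : t n * t m * ‖a n - a m‖ ≤ t n * t m * (2 * β * t N) := by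
        refine key.trans ?_
        have h4 : β * (t n * t m * ‖((t n : ℝ):ℂ) - ((t m : ℝ):ℂ)‖)
            ≤ β * (t n * t m * (2 * t N)) := by
          apply mul_le_mul_of_nonneg_left _ hβ
          apply mul_le_mul_of_nonneg_left h1 (by positivity)
        calc β * (t n * t m * ‖((t n : ℝ):ℂ) - ((t m : ℝ):ℂ)‖)
            ≤ β * (t n * t m * (2 * t N)) := h4
          _ = t n * t m * (2 * β * t N) := by ring
      have key4 := le_of_mul_le_mul_left key3
        (mul_pos (htpos n) (htpos m))
      rw [dist_eq_norm]
      exact key4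
  obtain ⟨L, hL⟩ := cauchySeq_tendsto_of_complete hcauchy
  refine ⟨L, fun s hsδ => ?_⟩
  rcases eq_or_ne s 0 with rfl | hs0
  · simp [hβ]
  have hspos : 0 < ‖s‖ := norm_pos_iff.mpr hs0
  have hev : ∀ᶠ n in atTop, ‖q s - q 0 - a n * s‖ ≤ β * (‖s‖ * ‖s - t n‖) := by
    filter_upwards [htend.eventually (gt_mem_nhds hspos)] with n hn
    apply hdq hs0 hsδ n
    intro h
    have heq : ‖s‖ = t n := by rw [← h, htnorm n]
    rw [heq] at hn
    exact lt_irrefl _ hn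
  have h1 : Tendsto (fun n => ‖q s - q 0 - a n * s‖) atTop (𝓝 ‖q s - q 0 - L * s‖) :=
    ((hL.mul_const s).const_sub (q s - q 0)).norm
  have h2 : Tendsto (fun n => β * (‖s‖ * ‖s - t n‖)) atTop (𝓝 (β * (‖s‖ * ‖s - 0‖))) := by
    apply Tendsto.const_mul
    apply Tendsto.const_mul
    have h3 : Tendsto (fun n => ((t n : ℝ) : ℂ)) atTop (𝓝 (0:ℂ)) := by
      have := Complex.continuous_ofReal.continuousAt (x := (0:ℝ))
      simpa [Function.comp_def] using this.tendsto.comp htend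
    exact ((h3.const_sub s).norm)
  have hfinal := le_of_tendsto_of_tendsto h1 h2 hev
  rw [sub_zero] at hfinal
  calc ‖q s - q 0 - L * s‖ ≤ β * (‖s‖ * ‖s‖) := hfinal
    _ = β * ‖s‖ ^ 2 := by ring

set_option maxHeartbeats 1000000 in
/-- generalized Hindmarsh theorem: if `H` is an RKHS of analytic
functions on an open set `Ω ⊆ ℂ^d` and `φ` has finite `3`-point multiplier norm,
then `φ` is analytic on `Ω`. -/
theorem analytic_of_threePointNorm_lt_top
    {d : ℕ} {H : Type*} [NormedAddCommGroup H] [InnerProductSpace ℂ H]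
    [CompleteSpace H] (Ω : Set (EuclideanSpace ℂ (Fin d))) (hΩ : IsOpen Ω)
    (R : RKHS' (↥Ω) H)
    (hol : ∀ f : H, DifferentiableOn ℂ (extFn Ω (R.eval f)) Ω)
    (φ : ↥Ω → ℂ) (hφ : R.nPointNorm 3 φ < ⊤) :
    DifferentiableOn ℂ (extFn Ω φ) Ω := by
  classical
  -- extract a constant witnessing 3-point positivity
  obtain ⟨C, hC⟩ : ∃ C : ℝ≥0, NPointPositive 3 fun z w =>
      R.ker z w * (((C : ℝ) : ℂ) ^ 2 - φ z * conj (φ w)) := by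
    by_contra hcon
    push_neg at hcon
    have : R.nPointNorm 3 φ = ⊤ := by
      rw [RKHS'.nPointNorm]
      rw [iInf_eq_top]
      intro C
      exact iInf_neg (hcon C)
    rw [this] at hφ
    exact lt_irrefl _ hφ
  have hext : ∀ (ψ : ↥Ω → ℂ) (z : ↥Ω), extFn Ω ψ (z : EuclideanSpace ℂ (Fin d)) = ψ z :=
    fun ψ z => Subtype.val_injective.extend_apply ψ _ z
  have hker : ∀ (z w : ↥Ω), R.ker z w = (inner ℂ (R.kvec z) (R.kvec w) : ℂ) :=
    fun z w => R.reproducing (R.kvec w) z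
  -- the master norm inequality from 3-point positivity
  have hB : ∀ (z : Fin 3 → ↥Ω) (c : Fin 3 → ℂ),
      ‖∑ i, (c i * conj (φ (z i))) • R.kvec (z i)‖
        ≤ (C:ℝ) * ‖∑ i, c i • R.kvec (z i)‖ := by
    intro z c
    have hpsd := (hC z).dotProduct_mulVec_nonneg c
    set v := ∑ i, c i • R.kvec (z i) with hv
    set w := ∑ i, (c i * conj (φ (z i))) • R.kvec (z i) with hw
    have hinner : ∀ co : Fin 3 → ℂ,
        (inner ℂ (∑ i, co i • R.kvec (z i)) (∑ j, co j • R.kvec (z j)) : ℂ)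
          = ∑ i, ∑ j, conj (co i) * co j * (inner ℂ (R.kvec (z i)) (R.kvec (z j)) : ℂ) := by
      intro co
      rw [sum_inner]
      refine Finset.sum_congr rfl fun i _ => ?_
      rw [inner_smul_left, inner_sum, Finset.mul_sum]
      refine Finset.sum_congr rfl fun j _ => ?_
      rw [inner_smul_right]; ring
    have hform : star c ⬝ᵥ ((Matrix.of fun i j : Fin 3 =>
          R.ker (z i) (z j) * (((C : ℝ) : ℂ) ^ 2 - φ (z i) * conj (φ (z j)))) *ᵥ c)
        = ((C:ℝ):ℂ)^2 * (inner ℂ v v : ℂ) - (inner ℂ w w : ℂ) := by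
      rw [hv, hw, hinner c, hinner (fun i => c i * conj (φ (z i)))]
      simp only [dotProduct, Matrix.mulVec, Matrix.of_apply, Pi.star_apply,
        RCLike.star_def, Finset.mul_sum]
      rw [← Finset.sum_sub_distrib]
      refine Finset.sum_congr rfl fun i _ => ?_
      rw [← Finset.sum_sub_distrib]
      refine Finset.sum_congr rfl fun j _ => ?_
      rw [hker (z i) (z j)]
      simp only [_root_.map_mul, Complex.conj_conj]
      ring
    rw [hform] at hpsd
    have hle : (inner ℂ w w : ℂ) ≤ ((C:ℝ):ℂ)^2 * (inner ℂ v v : ℂ) := sub_nonneg.mp hpsd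
    have hre := (Complex.le_def.mp hle).1
    have hwre : (inner ℂ w w : ℂ).re = ‖w‖^2 := by
      have h := @inner_self_eq_norm_sq ℂ _ _ _ _ w
      rwa [RCLike.re_eq_complex_re] at h
    have hvre : (inner ℂ v v : ℂ).re = ‖v‖^2 := by
      have h := @inner_self_eq_norm_sq ℂ _ _ _ _ v
      rwa [RCLike.re_eq_complex_re] at h
    have hCre : ((((C:ℝ):ℂ))^2 * (inner ℂ v v : ℂ)).re = (C:ℝ)^2 * (inner ℂ v v : ℂ).re := by
      simp [Complex.mul_re, ← Complex.ofReal_pow]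
    rw [hwre, hCre, hvre] at hre
    apply le_of_sq_le_sq _ (mul_nonneg C.coe_nonneg (norm_nonneg _))
    rw [mul_pow]
    linarith
  -- geometry setup
  intro x hx
  obtain ⟨ε, hε, hballε⟩ := Metric.isOpen_iff.mp hΩ x hx
  set xΩ : ↥Ω := ⟨x, hx⟩ with hxΩ
  set R₀ : ℝ := ε/2 with hR₀def
  have hR₀pos : 0 < R₀ := by rw [hR₀def]; positivity
  have hball : closedBall x R₀ ⊆ Ω :=
    (closedBall_subset_ball (by rw [hR₀def]; linarith)).trans hballε
  -- uniform bound on kernel vectors via Banach–Steinhaus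
  obtain ⟨N₀, hN₀nonneg, hN₀⟩ : ∃ N₀ : ℝ, 0 ≤ N₀ ∧ ∀ z : ↥Ω,
      (z : EuclideanSpace ℂ (Fin d)) ∈ closedBall x R₀ → ∀ f : H,
      ‖R.eval f z‖ ≤ N₀ * ‖f‖ := by
    have hpt : ∀ f : H, ∃ Cf, ∀ i : ↥(closedBall x R₀),
        ‖innerSL ℂ (R.kvec ⟨i.1, hball i.2⟩) f‖ ≤ Cf := by
      intro f
      obtain ⟨Cf, hCf⟩ := (isCompact_closedBall x R₀).exists_bound_of_continuousOn
        ((hol f).continuousOn.mono hball)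
      refine ⟨Cf, fun i => ?_⟩
      have h2 : innerSL ℂ (R.kvec ⟨i.1, hball i.2⟩) f = R.eval f ⟨i.1, hball i.2⟩ :=
        (R.reproducing f _).symm
      rw [h2, ← hext (R.eval f) ⟨i.1, hball i.2⟩]
      exact hCf i.1 i.2
    obtain ⟨N', hN'⟩ := banach_steinhaus hpt
    refine ⟨max N' 0, le_max_right _ _, fun z hz f => ?_⟩
    have h1 : R.eval f z = innerSL ℂ (R.kvec z) f := R.reproducing f z
    rw [h1]
    have h3 : ∀ (p : (z : EuclideanSpace ℂ (Fin d)) ∈ Ω),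
        (⟨(z : EuclideanSpace ℂ (Fin d)), p⟩ : ↥Ω) = z := fun p => Subtype.ext rfl
    calc ‖innerSL ℂ (R.kvec z) f‖ ≤ ‖innerSL ℂ (R.kvec z)‖ * ‖f‖ :=
          (innerSL ℂ (R.kvec z)).le_opNorm f
      _ ≤ max N' 0 * ‖f‖ := by
          apply mul_le_mul_of_nonneg_right _ (norm_nonneg f)
          refine le_trans ?_ (le_max_left _ _)
          have h4 := hN' ⟨(z : EuclideanSpace ℂ (Fin d)), hz⟩
          rwa [h3] at h4
  -- the product function g
  set gfun : EuclideanSpace ℂ (Fin d) → ℂ :=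
    fun y => extFn Ω φ y * extFn Ω (R.eval (R.kvec xΩ)) y with hgfun
  set Θ : ℝ := 64 * (C:ℝ) * ‖R.kvec xΩ‖ * N₀ with hΘdef
  have hΘnonneg : 0 ≤ Θ := by
    rw [hΘdef]
    have := C.coe_nonneg
    have := norm_nonneg (R.kvec xΩ)
    positivity
  -- the workhorse estimate
  have hW : ∀ (w₀ u : EuclideanSpace ℂ (Fin d)) (ρ : ℝ), 0 < ρ →
      (∀ τ : ℂ, ‖τ‖ < ρ → w₀ + τ • u ∈ closedBall x R₀) →
      ∀ a b c : ℂ, a ∈ ball (0:ℂ) (ρ/4) → b ∈ ball (0:ℂ) (ρ/4) →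
        c ∈ ball (0:ℂ) (ρ/4) → a ≠ b → a ≠ c → b ≠ c →
      ‖(gfun (w₀ + a•u) - gfun (w₀ + c•u)) * (b - c)
          - (gfun (w₀ + b•u) - gfun (w₀ + c•u)) * (a - c)‖
        ≤ Θ / ρ^2 * (‖a - c‖ * ‖b - c‖ * ‖a - b‖) := by
    intro w₀ u ρ hρ hmap a b c haB hbB hcB hab hac hbc
    have hmem : ∀ τ : ℂ, ‖τ‖ < ρ → w₀ + τ•u ∈ Ω := fun τ hτ => hball (hmap τ hτ)
    have hnorm4 : ∀ {τ : ℂ}, τ ∈ ball (0:ℂ) (ρ/4) → ‖τ‖ < ρ := by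
      intro τ h
      rw [mem_ball_zero_iff] at h
      linarith
    set za : ↥Ω := ⟨w₀ + a•u, hmem a (hnorm4 haB)⟩ with hza
    set zb : ↥Ω := ⟨w₀ + b•u, hmem b (hnorm4 hbB)⟩ with hzb
    set zc : ↥Ω := ⟨w₀ + c•u, hmem c (hnorm4 hcB)⟩ with hzc
    set zf : Fin 3 → ↥Ω := ![za, zb, zc] with hzf
    set co : Fin 3 → ℂ := ![b - c, -(a-c), (a-c)-(b-c)] with hco
    -- scalar estimate for every f in H
    have hscal : ∀ f : H, ‖∑ i, co i * R.eval f (zf i)‖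
        ≤ (64 * N₀ / ρ^2 * (‖a-c‖*‖b-c‖*‖a-b‖)) * ‖f‖ := by
      intro f
      set F : ℂ → ℂ := fun τ => extFn Ω (R.eval f) (w₀ + τ • u) with hF
      have hFd : DifferentiableOn ℂ F (ball (0:ℂ) ρ) := by
        have hψ : Differentiable ℂ (fun τ : ℂ => w₀ + τ • u) :=
          (differentiable_id.smul_const u).const_add w₀
        exact (hol f).comp hψ.differentiableOn
          (fun τ hτ => hmem τ (mem_ball_zero_iff.mp hτ))
      have hFb : ∀ τ ∈ ball (0:ℂ) ρ, ‖F τ‖ ≤ N₀ * ‖f‖ := by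
        intro τ hτ
        rw [mem_ball_zero_iff] at hτ
        have h1 := hN₀ ⟨w₀+τ•u, hmem τ hτ⟩ (hmap τ hτ) f
        rw [hF]
        rw [← hext (R.eval f) ⟨w₀+τ•u, hmem τ hτ⟩] at h1
        exact h1
      have hdd := hindmarsh_dd2 hρ hFd hFb haB hbB hcB hab hac hbc
      have hFz : ∀ (τ : ℂ) (hτ : w₀ + τ•u ∈ Ω), R.eval f ⟨w₀+τ•u, hτ⟩ = F τ := by
        intro τ hτ
        rw [hF]
        exact (hext (R.eval f) ⟨w₀+τ•u, hτ⟩).symm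
      have hcomb : ∑ i, co i * R.eval f (zf i)
          = (F a - F c)*(b-c) - (F b - F c)*(a-c) := by
        rw [hzf, hco]
        rw [Fin.sum_univ_three]
        simp only [Matrix.cons_val_zero, Matrix.cons_val_one, Matrix.head_cons,
          Matrix.cons_val_two, Matrix.tail_cons]
        rw [hza, hzb, hzc, hFz a _, hFz b _, hFz c _]
        ring
      rw [hcomb]
      calc ‖(F a - F c)*(b-c) - (F b - F c)*(a-c)‖
          ≤ 64 * (N₀ * ‖f‖) / ρ^2 * (‖a-c‖*‖b-c‖*‖a-b‖) := hdd
        _ = (64 * N₀ / ρ^2 * (‖a-c‖*‖b-c‖*‖a-b‖)) * ‖f‖ := by ring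
    -- the vector v and its norm bound
    set vv : H := ∑ i, (starRingEnd ℂ) (co i) • R.kvec (zf i) with hvv
    have hvinner : ∀ f : H, (inner ℂ vv f : ℂ) = ∑ i, co i * R.eval f (zf i) := by
      intro f
      rw [hvv, sum_inner]
      refine Finset.sum_congr rfl fun i _ => ?_
      rw [inner_smul_left, Complex.conj_conj, R.reproducing f (zf i)]
    set θ : ℝ := 64 * N₀ / ρ^2 * (‖a-c‖*‖b-c‖*‖a-b‖) with hθ
    have hθnonneg : 0 ≤ θ := by rw [hθ]; positivity
    have hvnorm : ‖vv‖ ≤ θ := by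
      rcases eq_or_lt_of_le (norm_nonneg vv) with h0 | hpos
      · rw [← h0]; exact hθnonneg
      · have h1 := hscal vv
        rw [← hvinner vv, inner_self_eq_norm_sq_to_K] at h1
        simp only [norm_pow, RCLike.norm_ofReal, abs_norm] at h1
        have h2 : ‖vv‖ * ‖vv‖ ≤ θ * ‖vv‖ := by
          calc ‖vv‖ * ‖vv‖ = ‖vv‖^2 := by ring
            _ ≤ θ * ‖vv‖ := h1
        exact le_of_mul_le_mul_right h2 hpos
    -- the vector w
    have hwnorm := hB zf (fun i => (starRingEnd ℂ) (co i))
    have hwinner : (inner ℂ (∑ i, ((starRingEnd ℂ) (co i) * conj (φ (zf i))) • R.kvec (zf i))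
        (R.kvec xΩ) : ℂ) = ∑ i, co i * (φ (zf i) * R.eval (R.kvec xΩ) (zf i)) := by
      rw [sum_inner]
      refine Finset.sum_congr rfl fun i _ => ?_
      rw [inner_smul_left]
      rw [← R.reproducing (R.kvec xΩ) (zf i)]
      simp only [_root_.map_mul, Complex.conj_conj]
      ring
    -- expressing the goal as the inner product
    have hgz : ∀ (τ : ℂ) (hτ : w₀ + τ•u ∈ Ω),
        gfun (w₀ + τ•u) = φ ⟨w₀+τ•u, hτ⟩ * R.eval (R.kvec xΩ) ⟨w₀+τ•u, hτ⟩ := by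
      intro τ hτ
      rw [hgfun]
      rw [← hext φ ⟨w₀+τ•u, hτ⟩, ← hext (R.eval (R.kvec xΩ)) ⟨w₀+τ•u, hτ⟩]
    have hgoal_eq : (gfun (w₀ + a•u) - gfun (w₀ + c•u)) * (b - c)
          - (gfun (w₀ + b•u) - gfun (w₀ + c•u)) * (a - c)
        = ∑ i, co i * (φ (zf i) * R.eval (R.kvec xΩ) (zf i)) := by
      rw [hzf, hco, Fin.sum_univ_three]
      simp only [Matrix.cons_val_zero, Matrix.cons_val_one, Matrix.head_cons,
        Matrix.cons_val_two, Matrix.tail_cons]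
      rw [hza, hzb, hzc]
      rw [hgz a (hmem a (hnorm4 haB)), hgz b (hmem b (hnorm4 hbB)), hgz c (hmem c (hnorm4 hcB))]
      ring
    rw [hgoal_eq, ← hwinner]
    calc ‖(inner ℂ (∑ i, ((starRingEnd ℂ) (co i) * conj (φ (zf i))) • R.kvec (zf i))
          (R.kvec xΩ) : ℂ)‖
        ≤ ‖∑ i, ((starRingEnd ℂ) (co i) * conj (φ (zf i))) • R.kvec (zf i)‖ * ‖R.kvec xΩ‖ :=
          norm_inner_le_norm _ _
      _ ≤ ((C:ℝ) * ‖vv‖) * ‖R.kvec xΩ‖ := by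
          apply mul_le_mul_of_nonneg_right _ (norm_nonneg _)
          rw [hvv]
          exact hwnorm
      _ ≤ ((C:ℝ) * θ) * ‖R.kvec xΩ‖ := by
          have h5 : (C:ℝ) * ‖vv‖ ≤ (C:ℝ) * θ :=
            mul_le_mul_of_nonneg_left hvnorm C.coe_nonneg
          apply mul_le_mul_of_nonneg_right h5 (norm_nonneg _)
      _ = Θ / ρ^2 * (‖a - c‖ * ‖b - c‖ * ‖a - b‖) := by
          rw [hθ, hΘdef]; ring
  -- directional derivative data
  set Θ' : ℝ := Θ / R₀^2 with hΘ'def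
  have hΘ'nonneg : 0 ≤ Θ' := by rw [hΘ'def]; positivity
  have hP : ∀ h : EuclideanSpace ℂ (Fin d), ∃ L : ℂ, ∀ s : ℂ, ‖s‖ * ‖h‖ < R₀/4 →
      ‖gfun (x + s•h) - gfun x - L*s‖ ≤ Θ' * ‖h‖^2 * ‖s‖^2 := by
    intro h
    rcases eq_or_ne h 0 with rfl | hh
    · refine ⟨0, fun s _ => ?_⟩
      simp only [smul_zero, add_zero, sub_self, zero_mul, sub_zero, norm_zero]
      positivity
    · have hhpos : 0 < ‖h‖ := norm_pos_iff.mpr hh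
      set ρ : ℝ := R₀/‖h‖ with hρdef
      have hρpos : 0 < ρ := by rw [hρdef]; positivity
      have hmapρ : ∀ τ:ℂ, ‖τ‖ < ρ → x + τ•h ∈ closedBall x R₀ := by
        intro τ hτ
        rw [mem_closedBall_iff_norm, add_sub_cancel_left, norm_smul]
        rw [hρdef, lt_div_iff₀ hhpos] at hτ
        exact le_of_lt hτ
      have hβ : (0:ℝ) ≤ Θ' * ‖h‖^2 := by positivity
      have hδ : (0:ℝ) < ρ/4 := by positivity
      have hq : ∀ s t : ℂ, s ≠ t → s ≠ 0 → t ≠ 0 → ‖s‖ < ρ/4 → ‖t‖ < ρ/4 →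
          ‖((fun σ : ℂ => gfun (x + σ•h)) s - (fun σ : ℂ => gfun (x + σ•h)) 0) * t
            - ((fun σ : ℂ => gfun (x + σ•h)) t - (fun σ : ℂ => gfun (x + σ•h)) 0) * s‖
          ≤ (Θ' * ‖h‖^2) * (‖s‖ * ‖t‖ * ‖s - t‖) := by
        intro s t hst hs0 ht0 hsδ htδ
        have hW1 := hW x h ρ hρpos hmapρ s t 0 (mem_ball_zero_iff.mpr hsδ)
          (mem_ball_zero_iff.mpr htδ) (mem_ball_zero_iff.mpr (by simpa using hδ))
          hst hs0 ht0
        simp only [zero_smul, add_zero, sub_zero] at hW1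
        have hconst : Θ / ρ^2 = Θ' * ‖h‖^2 := by
          rw [hρdef, hΘ'def]
          field_simp
        rw [hconst] at hW1
        simpa using hW1
      obtain ⟨L, hL⟩ := hindmarsh_deriv_exists hβ hδ hq
      refine ⟨L, fun s hs => ?_⟩
      have hquarter : R₀/4/‖h‖ = ρ/4 := by rw [hρdef]; ring
      have hs' : ‖s‖ < ρ/4 := by
        rw [← hquarter]
        rw [lt_div_iff₀ hhpos]
        exact hs
      have h1 := hL s hs'
      simp only [zero_smul, add_zero] at h1
      calc ‖gfun (x+s•h) - gfun x - L*s‖ ≤ Θ'*‖h‖^2*‖s‖^2 := h1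
        _ = Θ' * ‖h‖^2 * ‖s‖^2 := by ring
  choose A hA using hP
  -- uniqueness of the directional derivative
  have huniq : ∀ (h : EuclideanSpace ℂ (Fin d)) (L : ℂ),
      (∀ s : ℂ, ‖s‖ * ‖h‖ < R₀/4 → ‖gfun (x + s•h) - gfun x - L*s‖ ≤ Θ' * ‖h‖^2 * ‖s‖^2)
      → L = A h := by
    intro h L hL
    have key : ∀ ε : ℝ, 0 < ε → ε < R₀/(4*(‖h‖+1)) → ‖L - A h‖ ≤ (2*Θ'*‖h‖^2) * ε := by
      intro ε hεpos hεlt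
      have hεnorm : ‖((ε:ℝ):ℂ)‖ = ε := by
        rw [Complex.norm_real, Real.norm_of_nonneg (le_of_lt hεpos)]
      have hcond : ‖((ε:ℝ):ℂ)‖ * ‖h‖ < R₀/4 := by
        rw [hεnorm]
        have h2 : ε * ‖h‖ ≤ ε * (‖h‖+1) := by nlinarith
        have h3 : ε * (‖h‖+1) < R₀/4 := by
          rw [div_mul_eq_div_div] at hεlt
          rw [← lt_div_iff₀ (by positivity : (0:ℝ) < ‖h‖+1)]
          exact hεlt
        linarith
      have h1 := hL ((ε:ℝ):ℂ) hcond
      have h2 := hA h ((ε:ℝ):ℂ) hcond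
      have h3 : ‖(L - A h) * ((ε:ℝ):ℂ)‖ ≤ 2*(Θ' * ‖h‖^2 * ‖((ε:ℝ):ℂ)‖^2) := by
        rw [show (L - A h) * ((ε:ℝ):ℂ)
            = (gfun (x + ((ε:ℝ):ℂ)•h) - gfun x - A h * ((ε:ℝ):ℂ))
              - (gfun (x + ((ε:ℝ):ℂ)•h) - gfun x - L * ((ε:ℝ):ℂ)) from by ring]
        calc ‖(gfun (x + ((ε:ℝ):ℂ)•h) - gfun x - A h * ((ε:ℝ):ℂ))
              - (gfun (x + ((ε:ℝ):ℂ)•h) - gfun x - L * ((ε:ℝ):ℂ))‖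
            ≤ ‖gfun (x + ((ε:ℝ):ℂ)•h) - gfun x - A h * ((ε:ℝ):ℂ)‖
              + ‖gfun (x + ((ε:ℝ):ℂ)•h) - gfun x - L * ((ε:ℝ):ℂ)‖ := norm_sub_le _ _
          _ ≤ 2*(Θ' * ‖h‖^2 * ‖((ε:ℝ):ℂ)‖^2) := by linarith
      rw [norm_mul, hεnorm] at h3
      have h4 : ‖L - A h‖ * ε ≤ (2*Θ'*‖h‖^2*ε) * ε := by
        calc ‖L - A h‖ * ε ≤ 2*(Θ' * ‖h‖^2 * ε^2) := h3
          _ = (2*Θ'*‖h‖^2*ε) * ε := by ring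
      have := le_of_mul_le_mul_right h4 hεpos
      linarith [this]
    have hz : ‖L - A h‖ ≤ 0 := by
      apply hindmarsh_le_zero (show (0:ℝ) < R₀/(4*(‖h‖+1)) by positivity)
        (by positivity) key
    have := le_antisymm hz (norm_nonneg _)
    rwa [norm_eq_zero, sub_eq_zero] at this
  -- homogeneity
  have hhom : ∀ (μ : ℂ) (h), A (μ • h) = μ * A h := by
    intro μ h
    rcases eq_or_ne μ 0 with rfl | hμ0
    · rw [zero_smul, zero_mul]
      refine (huniq 0 0 (fun s hs => ?_)).symm
      simp only [smul_zero, add_zero, sub_self, zero_mul, sub_zero, norm_zero]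
      positivity
    · symm
      apply huniq (μ•h) (μ * A h)
      intro s hs
      have hcond : ‖s*μ‖ * ‖h‖ < R₀/4 := by
        rw [norm_mul]
        rw [norm_smul] at hs
        calc ‖s‖*‖μ‖*‖h‖ = ‖s‖*(‖μ‖*‖h‖) := by ring
          _ < R₀/4 := hs
      have h1 := hA h (s*μ) hcond
      have h2 : x + (s*μ)•h = x + s•(μ•h) := by rw [smul_smul]
      rw [h2] at h1
      rw [show μ * A h * s = A h * (s*μ) from by ring]
      calc ‖gfun (x+s•(μ•h)) - gfun x - A h*(s*μ)‖
          ≤ Θ'*‖h‖^2*‖s*μ‖^2 := h1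
        _ = Θ'*‖μ•h‖^2*‖s‖^2 := by rw [norm_mul, norm_smul]; ring
  -- additivity
  have hadd : ∀ h₁ h₂, A (h₁ + h₂) = A h₁ + A h₂ := by
    intro h₁ h₂
    rcases eq_or_ne h₂ h₁ with rfl | hne
    · have h2 : h₂ + h₂ = (2:ℂ)•h₂ := by rw [two_smul]
      rw [h2, hhom]
      ring
    · set m : EuclideanSpace ℂ (Fin d) := ((2:ℂ)⁻¹)•(h₁+h₂) with hm
      have hune : h₂ - h₁ ≠ 0 := sub_ne_zero.mpr hne
      have hupos : 0 < ‖h₂ - h₁‖ := norm_pos_iff.mpr hune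
      set K : ℝ := 2*Θ*‖h₂-h₁‖^2/R₀^2 + Θ'*(‖h₁‖^2+‖h₂‖^2+2*‖m‖^2) with hK
      have hKnonneg : 0 ≤ K := by rw [hK]; positivity
      set ε₀ : ℝ := min (min (R₀/(4*(‖h₁‖+1))) (R₀/(4*(‖h₂‖+1))))
        (min (R₀/(4*(‖m‖+1))) (R₀/(8*‖h₂-h₁‖))) with hε₀
      have hε₀pos : 0 < ε₀ := by
        rw [hε₀]
        apply lt_min (lt_min (by positivity) (by positivity))
          (lt_min (by positivity) (by positivity))
      have key : ∀ ε : ℝ, 0 < ε → ε < ε₀ → ‖A h₁ + A h₂ - 2*A m‖ ≤ K * ε := by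
        intro ε hεpos hεlt
        have hεnorm : ‖((ε:ℝ):ℂ)‖ = ε := by
          rw [Complex.norm_real, Real.norm_of_nonneg (le_of_lt hεpos)]
        have hbound : ∀ (h' : EuclideanSpace ℂ (Fin d)), ε < R₀/(4*(‖h'‖+1)) →
            ‖((ε:ℝ):ℂ)‖ * ‖h'‖ < R₀/4 := by
          intro h' hlt
          rw [hεnorm]
          have h2 : ε * ‖h'‖ ≤ ε * (‖h'‖+1) := by nlinarith
          have h3 : ε * (‖h'‖+1) < R₀/4 := by
            rw [div_mul_eq_div_div] at hlt
            rw [← lt_div_iff₀ (by positivity : (0:ℝ) < ‖h'‖+1)]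
            exact hlt
          linarith
        have hc₁ := hbound h₁ (lt_of_lt_of_le hεlt
          ((min_le_left _ _).trans (min_le_left _ _)))
        have hc₂ := hbound h₂ (lt_of_lt_of_le hεlt
          ((min_le_left _ _).trans (min_le_right _ _)))
        have hcm := hbound m (lt_of_lt_of_le hεlt
          ((min_le_right _ _).trans (min_le_left _ _)))
        have hcu : ε * ‖h₂-h₁‖ < R₀/8 := by
          have := lt_of_lt_of_le hεlt ((min_le_right _ _).trans (min_le_right _ _))
          rw [div_mul_eq_div_div] at this
          rw [← lt_div_iff₀ hupos]
          exact this
        have hE₁ := hA h₁ ((ε:ℝ):ℂ) hc₁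
        have hE₂ := hA h₂ ((ε:ℝ):ℂ) hc₂
        have hEm := hA m ((ε:ℝ):ℂ) hcm
        -- midpoint estimate via hW
        set ρε : ℝ := R₀/(2*(ε*‖h₂-h₁‖)) with hρε
        have hρεpos : 0 < ρε := by rw [hρε]; positivity
        have hmapε : ∀ τ:ℂ, ‖τ‖ < ρε → (x + ((ε:ℝ):ℂ)•h₁) + τ•(((ε:ℝ):ℂ)•(h₂-h₁))
            ∈ closedBall x R₀ := by
          intro τ hτ
          rw [mem_closedBall_iff_norm]
          have heq1 : (x + ((ε:ℝ):ℂ)•h₁) + τ•(((ε:ℝ):ℂ)•(h₂-h₁)) - x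
              = ((ε:ℝ):ℂ)•h₁ + τ•(((ε:ℝ):ℂ)•(h₂-h₁)) := by
            module
          rw [heq1]
          have h5 : ‖((ε:ℝ):ℂ)•h₁ + τ•(((ε:ℝ):ℂ)•(h₂-h₁))‖
              ≤ ε*‖h₁‖ + ‖τ‖*(ε*‖h₂-h₁‖) := by
            calc ‖((ε:ℝ):ℂ)•h₁ + τ•(((ε:ℝ):ℂ)•(h₂-h₁))‖
                ≤ ‖((ε:ℝ):ℂ)•h₁‖ + ‖τ•(((ε:ℝ):ℂ)•(h₂-h₁))‖ := norm_add_le _ _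
              _ = ε*‖h₁‖ + ‖τ‖*(ε*‖h₂-h₁‖) := by
                  rw [norm_smul, norm_smul, norm_smul, hεnorm]
          have h6 : ‖τ‖*(ε*‖h₂-h₁‖) < ρε*(ε*‖h₂-h₁‖) := by
            apply mul_lt_mul_of_pos_right hτ (by positivity)
          have h7 : ρε*(ε*‖h₂-h₁‖) = R₀/2 := by
            rw [hρε]
            field_simp
          have h8 : ε*‖h₁‖ ≤ R₀/4 := by
            rw [hεnorm] at hc₁
            linarith
          linarith
        have hρεbig : (4:ℝ) < ρε := by
          rw [hρε]
          rw [lt_div_iff₀ (by positivity : (0:ℝ) < 2*(ε*‖h₂-h₁‖))]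
          nlinarith [hcu]
        have h0B : (0:ℂ) ∈ ball (0:ℂ) (ρε/4) := by
          rw [mem_ball_zero_iff, norm_zero]; linarith
        have h1B : (1:ℂ) ∈ ball (0:ℂ) (ρε/4) := by
          rw [mem_ball_zero_iff, norm_one]; linarith
        have hhalfnorm : ‖((2:ℂ)⁻¹)‖ = 2⁻¹ := by
          rw [norm_inv]
          norm_num
        have hhalfB : ((2:ℂ)⁻¹) ∈ ball (0:ℂ) (ρε/4) := by
          rw [mem_ball_zero_iff, hhalfnorm]
          have : (2:ℝ)⁻¹ ≤ 1 := by norm_num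
          linarith
        have hWmid := hW (x + ((ε:ℝ):ℂ)•h₁) (((ε:ℝ):ℂ)•(h₂-h₁)) ρε hρεpos hmapε
          0 1 ((2:ℂ)⁻¹) h0B h1B hhalfB (by norm_num) (by norm_num) (by norm_num)
        have hp0 : (x + ((ε:ℝ):ℂ)•h₁) + (0:ℂ)•(((ε:ℝ):ℂ)•(h₂-h₁)) = x + ((ε:ℝ):ℂ)•h₁ := by
          module
        have hp1 : (x + ((ε:ℝ):ℂ)•h₁) + (1:ℂ)•(((ε:ℝ):ℂ)•(h₂-h₁)) = x + ((ε:ℝ):ℂ)•h₂ := by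
          module
        have hph : (x + ((ε:ℝ):ℂ)•h₁) + ((2:ℂ)⁻¹)•(((ε:ℝ):ℂ)•(h₂-h₁))
            = x + ((ε:ℝ):ℂ)•m := by
          rw [hm]; module
        rw [hp0, hp1, hph] at hWmid
        have hn1 : ‖(0:ℂ) - 2⁻¹‖ = 2⁻¹ := by
          rw [zero_sub, norm_neg, hhalfnorm]
        have hn2 : ‖(1:ℂ) - 2⁻¹‖ = 2⁻¹ := by
          rw [show (1:ℂ) - 2⁻¹ = 2⁻¹ from by norm_num, hhalfnorm]
        have hn3 : ‖(0:ℂ) - 1‖ = 1 := by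
          rw [zero_sub, norm_neg, norm_one]
        rw [hn1, hn2, hn3] at hWmid
        have hmidRHS : Θ/ρε^2 * ((2⁻¹:ℝ)*2⁻¹*1) = Θ*(ε^2*‖h₂-h₁‖^2)/R₀^2 := by
          rw [hρε]
          field_simp
        rw [hmidRHS] at hWmid
        have hSeq : (gfun (x+((ε:ℝ):ℂ)•h₁) - gfun (x+((ε:ℝ):ℂ)•m))*((1:ℂ)-2⁻¹)
              - (gfun (x+((ε:ℝ):ℂ)•h₂) - gfun (x+((ε:ℝ):ℂ)•m))*((0:ℂ)-2⁻¹)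
            = 2⁻¹ * (gfun (x+((ε:ℝ):ℂ)•h₁) + gfun (x+((ε:ℝ):ℂ)•h₂)
              - 2*gfun (x+((ε:ℝ):ℂ)•m)) := by
          ring
        rw [hSeq, norm_mul, hhalfnorm] at hWmid
        have hS : ‖gfun (x+((ε:ℝ):ℂ)•h₁) + gfun (x+((ε:ℝ):ℂ)•h₂)
            - 2*gfun (x+((ε:ℝ):ℂ)•m)‖ ≤ 2*(Θ*(ε^2*‖h₂-h₁‖^2)/R₀^2) := by
          nlinarith [hWmid]
        have hcombin : (A h₁ + A h₂ - 2*A m) * ((ε:ℝ):ℂ)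
            = (gfun (x+((ε:ℝ):ℂ)•h₁) + gfun (x+((ε:ℝ):ℂ)•h₂) - 2*gfun (x+((ε:ℝ):ℂ)•m))
              - (gfun (x+((ε:ℝ):ℂ)•h₁) - gfun x - A h₁*((ε:ℝ):ℂ))
              - (gfun (x+((ε:ℝ):ℂ)•h₂) - gfun x - A h₂*((ε:ℝ):ℂ))
              + 2*(gfun (x+((ε:ℝ):ℂ)•m) - gfun x - A m*((ε:ℝ):ℂ)) := by
          ring
        have hnormsum : ‖(A h₁ + A h₂ - 2*A m) * ((ε:ℝ):ℂ)‖ ≤ K * ε^2 := by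
          rw [hcombin]
          set S₁ : ℂ := gfun (x+((ε:ℝ):ℂ)•h₁) + gfun (x+((ε:ℝ):ℂ)•h₂)
            - 2*gfun (x+((ε:ℝ):ℂ)•m) with hS₁
          set F₁ : ℂ := gfun (x+((ε:ℝ):ℂ)•h₁) - gfun x - A h₁*((ε:ℝ):ℂ) with hF₁
          set F₂ : ℂ := gfun (x+((ε:ℝ):ℂ)•h₂) - gfun x - A h₂*((ε:ℝ):ℂ) with hF₂
          set Fm : ℂ := gfun (x+((ε:ℝ):ℂ)•m) - gfun x - A m*((ε:ℝ):ℂ) with hFm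
          have e1 := hE₁
          have e2 := hE₂
          have em := hEm
          rw [hεnorm] at e1 e2 em
          have tri : ‖S₁ - F₁ - F₂ + 2*Fm‖ ≤ ‖S₁‖ + ‖F₁‖ + ‖F₂‖ + 2*‖Fm‖ := by
            calc ‖S₁ - F₁ - F₂ + 2*Fm‖ ≤ ‖S₁ - F₁ - F₂‖ + ‖2*Fm‖ := norm_add_le _ _
              _ ≤ (‖S₁ - F₁‖ + ‖F₂‖) + ‖2*Fm‖ := by
                  have := norm_sub_le (S₁ - F₁) F₂
                  linarith
              _ ≤ (‖S₁‖ + ‖F₁‖ + ‖F₂‖) + ‖2*Fm‖ := by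
                  have := norm_sub_le S₁ F₁
                  linarith
              _ = ‖S₁‖ + ‖F₁‖ + ‖F₂‖ + 2*‖Fm‖ := by
                  rw [norm_mul]
                  norm_num
          calc ‖S₁ - F₁ - F₂ + 2*Fm‖ ≤ ‖S₁‖ + ‖F₁‖ + ‖F₂‖ + 2*‖Fm‖ := tri
            _ ≤ 2*(Θ*(ε^2*‖h₂-h₁‖^2)/R₀^2) + Θ'*‖h₁‖^2*ε^2 + Θ'*‖h₂‖^2*ε^2
                + 2*(Θ'*‖m‖^2*ε^2) := by
                have := hS
                gcongr <;> linarith [e1, e2, em]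
            _ = K * ε^2 := by rw [hK]; ring
        rw [norm_mul, hεnorm] at hnormsum
        have hfin : ‖A h₁ + A h₂ - 2*A m‖ * ε ≤ (K*ε) * ε := by
          calc ‖A h₁ + A h₂ - 2*A m‖ * ε ≤ K * ε^2 := hnormsum
            _ = (K*ε)*ε := by ring
        exact le_of_mul_le_mul_right hfin hεpos
      have hz : ‖A h₁ + A h₂ - 2*A m‖ ≤ 0 := hindmarsh_le_zero hε₀pos hKnonneg key
      have h9 : A h₁ + A h₂ - 2*A m = 0 := by
        have := le_antisymm hz (norm_nonneg _)
        rwa [norm_eq_zero] at this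
      have h10 : (2:ℂ)*A m = A (h₁+h₂) := by
        rw [← hhom 2 m, hm, smul_inv_smul₀ (by norm_num : (2:ℂ) ≠ 0)]
      rw [← h10]
      linear_combination -h9
  -- build the derivative as a continuous linear map
  have hlin : IsLinearMap ℂ A := by
    constructor
    · exact hadd
    · intro μ h
      rw [hhom μ h]
      rfl
  set Alin : EuclideanSpace ℂ (Fin d) →ₗ[ℂ] ℂ := IsLinearMap.mk' A hlin with hAlin
  set Acont : EuclideanSpace ℂ (Fin d) →L[ℂ] ℂ := LinearMap.toContinuousLinearMap Alin
    with hAcont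
  have hAcont_apply : ∀ h, Acont h = A h := fun h => rfl
  -- gfun has a Fréchet derivative at x
  have hderiv : HasFDerivAt gfun Acont x := by
    rw [hasFDerivAt_iff_isLittleO_nhds_zero]
    rw [Asymptotics.isLittleO_iff]
    intro ε' hε'
    have hδpos : 0 < min (R₀/8) (ε'/(Θ'+1)) := lt_min (by positivity) (by positivity)
    filter_upwards [Metric.ball_mem_nhds (0 : EuclideanSpace ℂ (Fin d)) hδpos] with h hmem
    rw [mem_ball_zero_iff] at hmem
    have hh8 : ‖h‖ < R₀/8 := lt_of_lt_of_le hmem (min_le_left _ _)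
    have hhε : ‖h‖ < ε'/(Θ'+1) := lt_of_lt_of_le hmem (min_le_right _ _)
    have hcond : ‖(1:ℂ)‖ * ‖h‖ < R₀/4 := by
      rw [norm_one, one_mul]
      linarith
    have h1 := hA h 1 hcond
    rw [one_smul, mul_one, norm_one] at h1
    rw [hAcont_apply]
    calc ‖gfun (x + h) - gfun x - A h‖ ≤ Θ' * ‖h‖^2 * 1^2 := h1
      _ = Θ' * ‖h‖ * ‖h‖ := by ring
      _ ≤ ε' * ‖h‖ := by
          apply mul_le_mul_of_nonneg_right _ (norm_nonneg h)
          have h2 : Θ' * ‖h‖ ≤ Θ' * (ε'/(Θ'+1)) :=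
            mul_le_mul_of_nonneg_left (le_of_lt hhε) hΘ'nonneg
          have h3 : Θ' * (ε'/(Θ'+1)) ≤ ε' := by
            rw [mul_div_assoc']
            rw [div_le_iff₀ (by positivity : (0:ℝ) < Θ'+1)]
            nlinarith
          linarith
  -- endgame: φ = gfun / e near x
  have hgdiff : DifferentiableAt ℂ gfun x := hderiv.differentiableAt
  have hediff : DifferentiableAt ℂ (extFn Ω (R.eval (R.kvec xΩ))) x :=
    (hol (R.kvec xΩ)).differentiableAt (hΩ.mem_nhds hx)
  have he0 : extFn Ω (R.eval (R.kvec xΩ)) x ≠ 0 := by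
    rw [show x = (xΩ : EuclideanSpace ℂ (Fin d)) from rfl, hext]
    exact R.nondeg xΩ
  have hne : ∀ᶠ y in 𝓝 x, extFn Ω (R.eval (R.kvec xΩ)) y ≠ 0 :=
    hediff.continuousAt.eventually_ne he0
  have heq : extFn Ω φ =ᶠ[𝓝 x] fun y => gfun y / extFn Ω (R.eval (R.kvec xΩ)) y := by
    filter_upwards [hne] with y hy
    simp only [hgfun]
    rw [mul_div_cancel_right₀ _ hy]
  have hdiv : DifferentiableAt ℂ (fun y => gfun y / extFn Ω (R.eval (R.kvec xΩ)) y) x := by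
    simp only [div_eq_mul_inv]
    exact hgdiff.mul (hediff.inv he0)
  exact (hdiv.congr_of_eventuallyEq heq).differentiableWithinAt

end
end

section
/- The two-point multiplier norm ‖·‖_{Mult(D),2} of the classical Dirichlet space D and the supremum norm over 𝔻 are not equivalent on the space of functions holomorphic in a neighborhood of the closed unit disc: there is no constant C > 0 with ‖f‖_{Mult(D),2} ≤ C·sup_{z∈𝔻}|f(z)| for all such f. In fact, for θ_r(z) = (r − z)/(1 − rz) one has ‖θ_r‖_{Mult(D),2} → ∞ as r ↗ 1, while ‖θ_r‖_∞ ≤ 1. -/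
open scoped ComplexConjugate ComplexOrder ENNReal NNReal

noncomputable section

/-- A reproducing kernel Hilbert space of complex-valued functions on `X`,
realized as an abstract Hilbert space `H` together with an injective linear
evaluation map into functions, kernel vectors and the reproducing property.
We include the standing assumption `K(x,x) ≠ 0`. -/
structure DirichletRKHS (X : Type*) (H : Type*) [NormedAddCommGroup H]
    [InnerProductSpace ℂ H] [CompleteSpace H] where
  eval : H →ₗ[ℂ] (X → ℂ)
  eval_injective : Function.Injective eval
  kvec : X → H
  reproducing : ∀ (f : H) (x : X), eval f x = (inner ℂ (kvec x) f : ℂ)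
  nondeg : ∀ x : X, eval (kvec x) x ≠ 0

namespace DirichletRKHS

variable {X H : Type*} [NormedAddCommGroup H] [InnerProductSpace ℂ H] [CompleteSpace H]

/-- The reproducing kernel `K(z,w)`. -/
def ker (R : DirichletRKHS X H) (z w : X) : ℂ := R.eval (R.kvec w) z

/-- `φ` is a multiplier of the space. -/
def IsMultiplier (R : DirichletRKHS X H) (φ : X → ℂ) : Prop :=
  ∀ f : H, ∃ g : H, R.eval g = fun x => φ x * R.eval f x

/-- The multiplier norm of `φ` (the operator norm of `M_φ`), `∞` if `φ` is
not a multiplier. -/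
def multNorm (R : DirichletRKHS X H) (φ : X → ℂ) : ℝ≥0∞ :=
  ⨅ (C : ℝ≥0) (_ : R.IsMultiplier φ ∧ ∀ f g : H,
      R.eval g = (fun x => φ x * R.eval f x) → ‖g‖ ≤ (C : ℝ) * ‖f‖), (C : ℝ≥0∞)

/-- The `n`-point multiplier norm of `φ`. -/
def nPointNorm (R : DirichletRKHS X H) (n : ℕ) (φ : X → ℂ) : ℝ≥0∞ :=
  ⨅ (C : ℝ≥0) (_ : NPointPositive n fun z w =>
      R.ker z w * (((C : ℝ) : ℂ) ^ 2 - φ z * conj (φ w))), (C : ℝ≥0∞)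

end DirichletRKHS

end

noncomputable section

open DirichletRKHS

/-- The open unit disc, as a subtype of `ℂ`. -/
abbrev UnitDisc : Type := ↥(Metric.ball (0 : ℂ) 1)

set_option maxHeartbeats 1000000

lemma hasSum_dir (u : ℝ) (h0 : 0 < u) (h1 : u < 1) :
    HasSum (fun n : ℕ => u ^ n / (n + 1)) (-Real.log (1 - u) / u) := by
  have h := (Real.hasSum_pow_div_log_of_abs_lt_one
    (x := u) (by rw [abs_of_pos h0]; exact h1)).div_const u
  refine h.congr_fun fun n => ?_
  rw [pow_succ]
  have hn : ((n : ℝ) + 1) ≠ 0 := by positivity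
  field_simp

lemma tsum_dir (u : ℝ) (h0 : 0 < u) (h1 : u < 1) :
    (∑' n : ℕ, ((u : ℂ)) ^ n / (n + 1)) = ((-Real.log (1 - u) / u : ℝ) : ℂ) := by
  have h : HasSum (fun n : ℕ => ((u : ℂ)) ^ n / (n + 1))
      ((-Real.log (1 - u) / u : ℝ) : ℂ) := by
    refine (Complex.hasSum_ofReal.mpr (hasSum_dir u h0 h1)).congr_fun fun n => ?_
    push_cast
    ring
  exact h.tsum_eq

lemma mem_disc (x : ℝ) (h0 : 0 ≤ x) (h1 : x < 1) : ((x:ℂ)) ∈ Metric.ball (0:ℂ) 1 := by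
  simp only [Metric.mem_ball, dist_zero_right, Complex.norm_real, Real.norm_eq_abs]
  rwa [abs_of_nonneg h0]

lemma mul_lt_one'' {x y : ℝ} (hx0 : 0 ≤ x) (hx : x < 1) (hy0 : 0 ≤ y) (hy : y < 1) :
    x*y < 1 := by nlinarith

lemma tt_ge {t : ℝ} (ht : 1/8 ≤ t) : 1/64 ≤ t*t := by nlinarith

lemma core_alg (a b e t δ M Cr : ℝ) (ha0 : 0 < a) (hb : b = (1-δ)*a) (hbe : b ≤ e)
    (ht : 1/8 ≤ t) (hδe : 64*M^2*δ = 1) (hM : 1 ≤ M) (hC0 : 0 < Cr)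
    (key1 : 4*(e*Cr^2)^2 ≤ 4*(b*(a*(Cr^2 - t*t)))*Cr^2) : M ≤ Cr := by
  have hM2 : (0:ℝ) < 64*M^2 := by positivity
  have hδ0 : 0 < δ := by nlinarith
  have hδ1 : δ < 1 := by nlinarith
  have hb0 : 0 < b := by rw [hb]; exact mul_pos (by linarith) ha0
  have he0 : 0 < e := hb0.trans_le hbe
  have hbb : b*b ≤ e*e := mul_le_mul hbe hbe hb0.le he0.le
  have key3 : (b*Cr^2)*(b*Cr^2) ≤ (b*Cr^2)*(a*(Cr^2 - t*t)) := by
    nlinarith [key1, mul_le_mul_of_nonneg_right hbb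
      (by positivity : (0:ℝ) ≤ Cr^2*Cr^2)]
  have key4 : b*Cr^2 ≤ a*(Cr^2 - t*t) :=
    le_of_mul_le_mul_left key3 (mul_pos hb0 (pow_pos hC0 2))
  rw [hb] at key4
  have key5 : t*t ≤ δ*Cr^2 := by nlinarith [key4, ha0]
  have h7 : 64*M^2*(δ*Cr^2) = Cr^2 := by
    rw [show 64*M^2*(δ*Cr^2) = (64*M^2*δ)*Cr^2 by ring, hδe, one_mul]
  have key6 : M^2 ≤ Cr^2 := by
    nlinarith [h7, mul_le_mul_of_nonneg_left key5 hM2.le,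
      mul_le_mul_of_nonneg_left (tt_ge ht) hM2.le]
  nlinarith [key6, hM, hC0]

lemma core {H : Type*} [NormedAddCommGroup H] [InnerProductSpace ℂ H] [CompleteSpace H]
    (R : DirichletRKHS UnitDisc H)
    (hker : ∀ z w : UnitDisc,
      R.ker z w = ∑' n : ℕ, ((z : ℂ) * conj (w : ℂ)) ^ n / (n + 1))
    (M : ℝ) (hM : 1 ≤ M) (r : ℝ) (hr2 : 1/2 < r) (hr1 : r < 1)
    (hsmall : 1 - r^2 ≤ (1/2 : ℝ) ^ (64*M^2 : ℝ))
    (C : ℝ≥0)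
    (hpos : NPointPositive 2 fun z w : UnitDisc =>
      R.ker z w * (((C:ℝ):ℂ)^2 -
        (((r:ℂ) - (z:ℂ))/(1 - (r:ℂ)*(z:ℂ))) * conj (((r:ℂ) - (w:ℂ))/(1 - (r:ℂ)*(w:ℂ))))) :
    M ≤ (C:ℝ) := by
  have hr0 : 0 < r := by linarith
  set δ : ℝ := 1/(64*M^2) with hδdef
  have hM0 : 0 < M := by linarith
  have hδ0 : 0 < δ := by positivity
  have hδ1 : δ < 1 := by
    rw [hδdef, div_lt_one (by positivity)]
    nlinarith
  set u : ℝ := 1 - r^2 with hudef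
  have hu0 : 0 < u := by nlinarith
  have hu1 : u < 1 := by nlinarith
  set v : ℝ := u ^ (1-δ : ℝ) with hvdef
  have hv0 : 0 < v := Real.rpow_pos_of_pos hu0 _
  have huv : u < v := by
    calc u = u ^ (1:ℝ) := (Real.rpow_one u).symm
    _ < u ^ (1-δ : ℝ) := Real.rpow_lt_rpow_of_exponent_gt hu0 hu1 (by linarith)
  have hv1 : v < 1 := Real.rpow_lt_one hu0.le hu1 (by linarith)
  have hudelta : u ^ (δ:ℝ) ≤ 1/2 := by
    have h1 : u ^ (δ:ℝ) ≤ ((1/2 : ℝ) ^ (64*M^2 : ℝ)) ^ (δ:ℝ) :=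
      Real.rpow_le_rpow hu0.le hsmall hδ0.le
    have h2 : ((1/2 : ℝ) ^ (64*M^2 : ℝ)) ^ (δ:ℝ) = (1/2 : ℝ) := by
      rw [← Real.rpow_mul (by norm_num)]
      rw [show (64*M^2) * δ = 1 by rw [hδdef]; field_simp]
      exact Real.rpow_one _
    linarith
  have husplit : u = v * u ^ (δ:ℝ) := by
    rw [hvdef, ← Real.rpow_add hu0]
    norm_num
  have hudpos : 0 < u ^ (δ:ℝ) := Real.rpow_pos_of_pos hu0 _
  set s : ℝ := Real.sqrt (1 - v) with hsdef
  have hs2 : s^2 = 1 - v := Real.sq_sqrt (by linarith)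
  have hs0 : 0 < s := Real.sqrt_pos.2 (by linarith)
  have hs1 : s < 1 := by nlinarith [hs2, hv0, hs0]
  have hsr : s < r := by nlinarith [hs2, huv, hs0, hr0]
  have hsr1 : s * r < 1 := by nlinarith [mul_pos (sub_pos.2 hs1) (sub_pos.2 hr1)]
  have hrs0 : 0 < 1 - r * s := by nlinarith [hsr1]
  -- logs
  set a : ℝ := -Real.log u with hadef
  have ha0 : 0 < a := by
    have := Real.log_neg hu0 hu1
    rw [hadef]; linarith
  set b : ℝ := -Real.log (1 - s*s) with hbdef
  have hss : 1 - s*s = v := by nlinarith [hs2]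
  have hb : b = (1-δ)*a := by
    rw [hbdef, hss, hvdef, Real.log_rpow hu0, hadef]; ring
  have hb0 : 0 < b := by rw [hb]; exact mul_pos (by linarith) ha0
  set e : ℝ := -Real.log (1 - s*r) with hedef
  have hsr2 : 1 - s*r < v := by nlinarith [mul_pos hs0 (sub_pos.2 hsr), hss]
  have hsr3 : 0 < 1 - s*r := by linarith [hsr1]
  have hbe : b ≤ e := by
    rw [hbdef, hedef, hss, neg_le_neg_iff]
    exact Real.log_le_log hsr3 hsr2.le
  have he0 : 0 < e := lt_of_lt_of_le hb0 hbe
  -- t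
  set t : ℝ := (r - s)/(1 - r*s) with htdef
  have hrs_eq : (r - s) * (r + s) = v - u := by linear_combination hudef - hs2
  have hnum : (v - u)/2 ≤ r - s := by
    nlinarith [hrs_eq, mul_nonneg (sub_pos.2 hsr).le (by linarith : (0:ℝ) ≤ 2 - (r+s))]
  have h1rs : (1 - r*s) * (1 + r*s) = u + v - u*v := by
    linear_combination (v-1)*hudef + (r^2)*(hss)
  have huv2 : u ≤ v/2 := by
    nlinarith [husplit, mul_nonneg hv0.le (by linarith : (0:ℝ) ≤ 1/2 - u ^ (δ:ℝ))]
  have hden : 1 - r*s ≤ 2*v := by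
    nlinarith [h1rs, mul_nonneg hrs0.le (mul_pos hr0 hs0).le, mul_nonneg hu0.le hv0.le]
  have ht : 1/8 ≤ t := by
    rw [htdef, le_div_iff₀ hrs0]
    linarith
  have ht0 : 0 < t := by linarith
  -- kernel values
  set KA : ℝ := -Real.log (1 - r*r) / (r*r) with hKAdef
  set KB : ℝ := -Real.log (1 - s*s) / (s*s) with hKBdef
  set KE : ℝ := -Real.log (1 - s*r) / (s*r) with hKEdef
  have hrru : 1 - r*r = u := by rw [hudef]; ring
  have hKA0 : 0 < KA := by
    apply div_pos _ (mul_pos hr0 hr0)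
    rw [hrru]; exact ha0
  have hKB0 : 0 < KB := div_pos hb0 (mul_pos hs0 hs0)
  have hKE0 : 0 < KE := div_pos he0 (mul_pos hs0 hr0)
  -- points
  have hzs : ((s:ℂ)) ∈ Metric.ball (0:ℂ) 1 := mem_disc s hs0.le hs1
  have hzr : ((r:ℂ)) ∈ Metric.ball (0:ℂ) 1 := mem_disc r hr0.le hr1
  set zs : UnitDisc := ⟨(s:ℂ), hzs⟩ with hzsdef
  set zr : UnitDisc := ⟨(r:ℂ), hzr⟩ with hzrdef
  have hvs : ((zs : ℂ)) = (s:ℂ) := rfl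
  have hvr : ((zr : ℂ)) = (r:ℂ) := rfl
  have hker_ss : R.ker zs zs = ((KB : ℝ) : ℂ) := by
    rw [hker, hvs, Complex.conj_ofReal, ← Complex.ofReal_mul,
      tsum_dir (s*s) (mul_pos hs0 hs0) (mul_lt_one'' hs0.le hs1 hs0.le hs1), hKBdef]
  have hker_sr : R.ker zs zr = ((KE : ℝ) : ℂ) := by
    rw [hker, hvs, hvr, Complex.conj_ofReal, ← Complex.ofReal_mul,
      tsum_dir (s*r) (mul_pos hs0 hr0) hsr1, hKEdef]
  have hker_rs : R.ker zr zs = ((KE : ℝ) : ℂ) := by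
    rw [hker, hvs, hvr, Complex.conj_ofReal, ← Complex.ofReal_mul,
      tsum_dir (r*s) (mul_pos hr0 hs0) (mul_lt_one'' hr0.le hr1 hs0.le hs1), hKEdef]
    rw [show r*s = s*r by ring]
  have hker_rr : R.ker zr zr = ((KA : ℝ) : ℂ) := by
    rw [hker, hvr, Complex.conj_ofReal, ← Complex.ofReal_mul,
      tsum_dir (r*r) (mul_pos hr0 hr0) (mul_lt_one'' hr0.le hr1 hr0.le hr1), hKAdef]
  have hphis : ((r:ℂ) - (zs:ℂ))/(1 - (r:ℂ)*(zs:ℂ)) = ((t:ℝ):ℂ) := by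
    rw [hvs, htdef]
    push_cast
    ring
  have hphir : ((r:ℂ) - (zr:ℂ))/(1 - (r:ℂ)*(zr:ℂ)) = 0 := by
    rw [hvr, sub_self, zero_div]
  -- quadratic form
  have hq : ∀ x1 x2 : ℝ, 0 ≤ KB*((C:ℝ)^2 - t*t)*(x1*x1)
      + 2*(KE*(C:ℝ)^2)*(x1*x2) + KA*(C:ℝ)^2*(x2*x2) := by
    intro x1 x2
    have h := (Matrix.posSemidef_iff_dotProduct_mulVec.mp (hpos ![zs, zr])).2 ![(x1:ℂ), (x2:ℂ)]
    simp only [dotProduct, Matrix.mulVec, Fin.sum_univ_two, Matrix.of_apply,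
      Matrix.cons_val', Matrix.cons_val_zero, Matrix.cons_val_one, Matrix.head_cons,
      Matrix.empty_val', Matrix.cons_val_fin_one, Pi.star_apply, RCLike.star_def] at h
    rw [hker_ss, hker_sr, hker_rs, hker_rr, hphis, hphir] at h
    simp only [map_zero, mul_zero, zero_mul, sub_zero, Complex.conj_ofReal] at h
    have h2 : (0:ℂ) ≤ ((KB*((C:ℝ)^2 - t*t)*(x1*x1)
        + 2*(KE*(C:ℝ)^2)*(x1*x2) + KA*(C:ℝ)^2*(x2*x2) : ℝ) : ℂ) := by
      convert h using 1
      push_cast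
      ring
    exact Complex.zero_le_real.mp h2
  have haq : 0 ≤ (C:ℝ)^2 - t*t := by
    have h10 := hq 1 0
    exact le_of_mul_le_mul_left (by linarith only [h10] : KB*(0:ℝ) ≤ KB*((C:ℝ)^2 - t*t)) hKB0
  have hC0 : 0 < (C:ℝ) := by
    rcases lt_or_eq_of_le C.coe_nonneg with h | h
    · exact h
    · exfalso
      rw [← h] at haq
      have := tt_ge ht
      norm_num at haq
      linarith only [haq, this]
  have hdisc := discrim_le_zero
    (a := KB*((C:ℝ)^2 - t*t)) (b := 2*(KE*(C:ℝ)^2)) (c := KA*(C:ℝ)^2)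
    (fun x => by have hx := hq x 1; linarith only [hx])
  rw [discrim] at hdisc
  -- clear denominators
  have hE : KE*(s*r) = e := by
    rw [hKEdef, hedef]
    field_simp
  have hB : KB*(s*s) = b := by
    rw [hKBdef, hbdef]
    field_simp
  have hA : KA*(r*r) = a := by
    rw [hKAdef, hrru, hadef]
    field_simp
  have key1 : (2*(KE*(C:ℝ)^2))^2 * ((s*r)*(s*r))
      ≤ 4*(KB*((C:ℝ)^2 - t*t))*(KA*(C:ℝ)^2) * ((s*r)*(s*r)) := by
    apply mul_le_mul_of_nonneg_right _ (by positivity)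
    linarith only [hdisc]
  rw [show (2*(KE*(C:ℝ)^2))^2 * ((s*r)*(s*r)) = 4*((KE*(s*r))*(C:ℝ)^2)^2 by ring] at key1
  rw [show 4*(KB*((C:ℝ)^2 - t*t))*(KA*(C:ℝ)^2) * ((s*r)*(s*r))
      = 4*((KB*(s*s))*((KA*(r*r))*((C:ℝ)^2 - t*t)))*(C:ℝ)^2 by ring] at key1
  rw [hE, hB, hA] at key1
  exact core_alg a b e t δ M (C:ℝ) ha0 hb hbe ht
    (by rw [hδdef]; field_simp) hM hC0 key1

lemma theta_abs_le (r : ℝ) (h0 : 0 ≤ r) (h1 : r < 1) (z : ℂ) (hz : ‖z‖ < 1) :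
    ‖((r:ℂ) - z) / (1 - (r:ℂ)*z)‖ ≤ 1 := by
  rw [norm_div]
  apply div_le_one_of_le₀ _ (norm_nonneg _)
  have hz1 : z.re * z.re + z.im * z.im < 1 := by
    have h := Complex.sq_norm z
    rw [Complex.normSq_apply] at h
    nlinarith [norm_nonneg z]
  have h2 : ‖(r:ℂ) - z‖ ^ 2 ≤ ‖1 - (r:ℂ)*z‖ ^ 2 := by
    rw [Complex.sq_norm, Complex.sq_norm, Complex.normSq_apply, Complex.normSq_apply]
    simp only [Complex.sub_re, Complex.sub_im, Complex.mul_re, Complex.mul_im,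
      Complex.one_re, Complex.one_im, Complex.ofReal_re, Complex.ofReal_im]
    nlinarith [mul_nonneg (by nlinarith : (0:ℝ) ≤ 1 - r*r)
      (by nlinarith : (0:ℝ) ≤ 1 - z.re*z.re - z.im*z.im)]
  nlinarith [norm_nonneg ((r:ℂ) - z), norm_nonneg (1 - (r:ℂ)*z)]

lemma blowup {H : Type*} [NormedAddCommGroup H] [InnerProductSpace ℂ H] [CompleteSpace H]
    (R : DirichletRKHS UnitDisc H)
    (hker : ∀ z w : UnitDisc,
      R.ker z w = ∑' n : ℕ, ((z : ℂ) * conj (w : ℂ)) ^ n / (n + 1)) :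
    Filter.Tendsto
        (fun r : ℝ => R.nPointNorm 2
          (fun z : UnitDisc => ((r : ℂ) - z) / (1 - (r : ℂ) * z)))
        (nhdsWithin 1 (Set.Iio 1)) (nhds ⊤) := by
  apply ENNReal.tendsto_nhds_top
  intro n
  set M : ℝ := (n:ℝ) + 1 with hMdef
  have hM : 1 ≤ M := by
    have : (0:ℝ) ≤ n := Nat.cast_nonneg n
    rw [hMdef]; linarith
  have hc0 : (0:ℝ) < (1/2:ℝ) ^ (64*M^2:ℝ) := Real.rpow_pos_of_pos (by norm_num) _
  have h1 : ∀ᶠ r : ℝ in nhds 1, 1 - r^2 < (1/2:ℝ) ^ (64*M^2:ℝ) := by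
    have hcont : ContinuousAt (fun r : ℝ => 1 - r^2) 1 := by fun_prop
    have h0 : (1:ℝ) - 1^2 = 0 := by norm_num
    have htd : Filter.Tendsto (fun r : ℝ => 1 - r^2) (nhds 1) (nhds 0) := by
      rw [← h0]; exact hcont.tendsto
    exact htd.eventually_lt_const hc0
  have h2 : ∀ᶠ r : ℝ in nhds 1, (1:ℝ)/2 < r := eventually_gt_nhds (by norm_num)
  have h3 : ∀ᶠ r : ℝ in nhdsWithin 1 (Set.Iio 1), r ∈ Set.Iio (1:ℝ) :=
    eventually_mem_nhdsWithin
  filter_upwards [(h1.and h2).filter_mono nhdsWithin_le_nhds, h3] with r hr hr1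
  obtain ⟨hrc, hr2⟩ := hr
  rw [Set.mem_Iio] at hr1
  have hstep : ENNReal.ofReal M ≤ R.nPointNorm 2
      (fun z : UnitDisc => ((r : ℂ) - z) / (1 - (r : ℂ) * z)) := by
    rw [DirichletRKHS.nPointNorm]
    refine le_iInf fun C => le_iInf fun hp => ?_
    have hC := core R hker M hM r hr2 hr1 hrc.le C hp
    calc ENNReal.ofReal M ≤ ENNReal.ofReal (C:ℝ) := ENNReal.ofReal_le_ofReal hC
    _ = (C:ℝ≥0∞) := ENNReal.ofReal_coe_nnreal
  refine lt_of_lt_of_le ?_ hstep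
  rw [hMdef, ENNReal.ofReal_add (Nat.cast_nonneg n) zero_le_one,
    ENNReal.ofReal_natCast, ENNReal.ofReal_one]
  exact ENNReal.lt_add_right (ENNReal.natCast_ne_top n) one_ne_zero


/-- on the classical Dirichlet space, the two-point multiplier norm
is not dominated by the sup norm on functions holomorphic in a neighbourhood of
the closed disc; indeed it blows up along the automorphisms
`θ_r(z) = (r-z)/(1-rz)` as `r ↗ 1`, while `‖θ_r‖_∞ ≤ 1`. -/
theorem dirichlet_twoPointNorm_not_equivalent_supNorm
    {H : Type*} [NormedAddCommGroup H] [InnerProductSpace ℂ H] [CompleteSpace H]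
    (R : DirichletRKHS UnitDisc H)
    (hker : ∀ z w : UnitDisc,
      R.ker z w = ∑' n : ℕ, ((z : ℂ) * conj (w : ℂ)) ^ n / (n + 1)) :
    (¬ ∃ C : ℝ, 0 < C ∧ ∀ f : ℂ → ℂ,
        (∃ U : Set ℂ, IsOpen U ∧ Metric.closedBall (0 : ℂ) 1 ⊆ U ∧
          DifferentiableOn ℂ f U) →
        R.nPointNorm 2 (fun z : UnitDisc => f z) ≤
          ENNReal.ofReal (C * ⨆ z : UnitDisc, ‖f z‖)) ∧
    Filter.Tendsto
        (fun r : ℝ => R.nPointNorm 2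
          (fun z : UnitDisc => ((r : ℂ) - z) / (1 - (r : ℂ) * z)))
        (nhdsWithin 1 (Set.Iio 1)) (nhds ⊤) ∧
    ∀ r : ℝ, 0 ≤ r → r < 1 → ∀ z : UnitDisc,
      ‖((r : ℂ) - z) / (1 - (r : ℂ) * z)‖ ≤ 1 := by
  have part3 : ∀ r : ℝ, 0 ≤ r → r < 1 → ∀ z : UnitDisc,
      ‖((r : ℂ) - z) / (1 - (r : ℂ) * z)‖ ≤ 1 := by
    intro r h0 h1 z
    have hz : ‖(z:ℂ)‖ < 1 := by
      have h := z.2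
      rw [Metric.mem_ball, dist_zero_right] at h
      exact h
    exact theta_abs_le r h0 h1 z hz
  have part2 := blowup R hker
  refine ⟨?_, part2, part3⟩
  rintro ⟨Cc, hCc, hall⟩
  have hev1 : ∀ᶠ r : ℝ in nhdsWithin 1 (Set.Iio 1),
      ENNReal.ofReal Cc < R.nPointNorm 2
        (fun z : UnitDisc => ((r : ℂ) - z) / (1 - (r : ℂ) * z)) :=
    part2.eventually (eventually_gt_nhds ENNReal.ofReal_lt_top)
  have hev2 : ∀ᶠ r : ℝ in nhdsWithin 1 (Set.Iio 1), (1:ℝ)/2 < r :=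
    (eventually_gt_nhds (by norm_num : (1:ℝ)/2 < 1)).filter_mono nhdsWithin_le_nhds
  have hev3 : ∀ᶠ r : ℝ in nhdsWithin 1 (Set.Iio 1), r ∈ Set.Iio (1:ℝ) :=
    eventually_mem_nhdsWithin
  obtain ⟨r, ⟨⟨hlt, hr2⟩, hr1⟩⟩ := ((hev1.and hev2).and hev3).exists
  rw [Set.mem_Iio] at hr1
  have hr0 : (0:ℝ) < r := by linarith
  have hρ : (1:ℝ) < (1 + 1/r)/2 := by
    have h0 : (1:ℝ) < 1/r := by rw [lt_div_iff₀ hr0]; linarith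
    linarith
  have hdiff : DifferentiableOn ℂ (fun z : ℂ => ((r : ℂ) - z) / (1 - (r : ℂ) * z))
      (Metric.ball 0 ((1 + 1/r)/2)) := by
    apply DifferentiableOn.div
    · exact ((differentiable_const _).sub differentiable_id).differentiableOn
    · exact ((differentiable_const _).sub
        ((differentiable_const _).mul differentiable_id)).differentiableOn
    · intro z hz
      rw [sub_ne_zero]
      intro hcon
      rw [Metric.mem_ball, dist_zero_right] at hz
      have h5 : r * ‖z‖ < r * ((1 + 1/r)/2) :=
        mul_lt_mul_of_pos_left hz hr0
      have h6 : r * ((1 + 1/r)/2) = (r + 1)/2 := by field_simp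
      have h7 : ‖(r:ℂ) * z‖ = r * ‖z‖ := by
        rw [norm_mul, Complex.norm_real, Real.norm_eq_abs, abs_of_pos hr0]
      have h8 : ‖(1:ℂ)‖ = 1 := by simp
      rw [hcon] at h8
      rw [h7] at h8
      linarith [h5, h6, h8.ge, h8.le]
  have hsub : Metric.closedBall (0:ℂ) 1 ⊆ Metric.ball 0 ((1 + 1/r)/2) :=
    Metric.closedBall_subset_ball hρ
  have hsup : (⨆ z : UnitDisc, ‖((r : ℂ) - (z:ℂ)) / (1 - (r : ℂ) * (z:ℂ))‖) ≤ 1 :=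
    Real.iSup_le (fun z => part3 r hr0.le hr1 z) zero_le_one
  have hle := hall (fun z : ℂ => ((r : ℂ) - z) / (1 - (r : ℂ) * z))
    ⟨_, Metric.isOpen_ball, hsub, hdiff⟩
  have hfin : R.nPointNorm 2 (fun z : UnitDisc => ((r : ℂ) - (z:ℂ)) / (1 - (r : ℂ) * (z:ℂ)))
      ≤ ENNReal.ofReal Cc := by
    refine le_trans hle (ENNReal.ofReal_le_ofReal ?_)
    exact mul_le_of_le_one_right hCc.le hsup
  exact absurd hfin (not_le.mpr hlt)


end
end

section
/- Let S₁ and S₂ be unilateral weighted shifts on a Hilbert space with orthonormal basis (e_n)_{n≥0}, given by S₁e_n = α_n e_{n+1} and S₂e_n = β_n e_{n+1} with α_n, β_n > 0 for all n. If β_n ≤ α_n for all n ∈ ℕ₀, then the map p(S₁) ↦ p(S₂) for polynomials p is a unital complete contraction; i.e., for every r ∈ ℕ and every r × r matrix of polynomials [p_{ij}], ‖[p_{ij}(S₂)]‖ ≤ ‖[p_{ij}(S₁)]‖ (operator norms on the r-fold direct sum). -/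
noncomputable section

open Finset Polynomial

namespace KacnelsonAux

local notation "conj'" => starRingEnd ℂ

section Hilb

variable {H : Type*} [NormedAddCommGroup H] [InnerProductSpace ℂ H] [CompleteSpace H]

/-- Norm-squared of a finite combination of orthonormal vectors. -/
lemma norm_sum_sq (e : HilbertBasis ℕ ℂ H) (s : Finset ℕ) (l : ℕ → ℂ) :
    ‖∑ m ∈ s, l m • (e m : H)‖ ^ 2 = ∑ m ∈ s, ‖l m‖ ^ 2 := by
  have h := e.orthonormal.inner_sum l l s
  have h1 : ‖∑ m ∈ s, l m • (e m : H)‖ ^ 2 = Complex.re (∑ i ∈ s, conj' (l i) * l i) := by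
    rw [← inner_self_eq_norm_sq (𝕜 := ℂ), h]; rfl
  rw [h1, Complex.re_sum]
  refine Finset.sum_congr rfl fun m _ => ?_
  rw [mul_comm, Complex.mul_conj, Complex.ofReal_re, ← Complex.sq_norm]

lemma pow_apply_basis (e : HilbertBasis ℕ ℂ H) (S : H →L[ℂ] H) (γ : ℕ → ℝ)
    (hS : ∀ n : ℕ, S (e n) = (γ n : ℂ) • e (n + 1)) (k : ℕ) :
    ∀ n : ℕ, (S ^ k) (e n) = (∏ t ∈ range k, (γ (n + t) : ℂ)) • e (n + k) := by
  induction k with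
  | zero => intro n; simp
  | succ k ih =>
    intro n
    rw [pow_succ, ContinuousLinearMap.mul_apply, hS n, map_smul, ih (n + 1), smul_smul]
    rw [show n + 1 + k = n + (k + 1) by omega]
    congr 1
    rw [Finset.prod_range_succ' (fun t => (γ (n + t) : ℂ)) k, mul_comm]
    congr 1
    refine Finset.prod_congr rfl fun t _ => ?_
    rw [show n + (t + 1) = n + 1 + t by omega]

lemma aeval_apply_basis (e : HilbertBasis ℕ ℂ H) (S : H →L[ℂ] H) (γ : ℕ → ℝ)
    (hS : ∀ n : ℕ, S (e n) = (γ n : ℂ) • e (n + 1)) (q : Polynomial ℂ) (d : ℕ)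
    (hd : q.natDegree ≤ d) (n : ℕ) :
    (Polynomial.aeval S q : H →L[ℂ] H) (e n)
      = ∑ k ∈ range (d + 1), (q.coeff k * ∏ t ∈ range k, (γ (n + t) : ℂ)) • e (n + k) := by
  rw [Polynomial.aeval_eq_sum_range' (lt_of_le_of_lt hd (Nat.lt_succ_self d)) S]
  rw [ContinuousLinearMap.sum_apply]
  refine Finset.sum_congr rfl fun k _ => ?_
  rw [ContinuousLinearMap.smul_apply, pow_apply_basis e S γ hS k n, smul_smul]

end Hilb

/-- Move the first summation index past three others. -/
lemma sum_comm4 {β : Type*} [AddCommMonoid β] {ι₁ ι₂ ι₃ ι₄ : Type*}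
    (s₁ : Finset ι₁) (s₂ : Finset ι₂) (s₃ : Finset ι₃) (s₄ : Finset ι₄)
    (F : ι₁ → ι₂ → ι₃ → ι₄ → β) :
    ∑ a ∈ s₁, ∑ b ∈ s₂, ∑ c ∈ s₃, ∑ d ∈ s₄, F a b c d
      = ∑ b ∈ s₂, ∑ c ∈ s₃, ∑ d ∈ s₄, ∑ a ∈ s₁, F a b c d := by
  rw [Finset.sum_comm]
  refine Finset.sum_congr rfl fun b _ => ?_
  rw [Finset.sum_comm]
  refine Finset.sum_congr rfl fun c _ => ?_
  rw [Finset.sum_comm]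

section Hilb2

variable {H : Type*} [NormedAddCommGroup H] [InnerProductSpace ℂ H] [CompleteSpace H]

/-- Expansion of a row of a polynomial matrix applied to finitely supported vectors. -/
lemma expand (e : HilbertBasis ℕ ℂ H) (S : H →L[ℂ] H) (γ : ℕ → ℝ)
    (hS : ∀ n : ℕ, S (e n) = (γ n : ℂ) • e (n + 1)) {r : ℕ}
    (p : Fin r → Fin r → Polynomial ℂ) (N d : ℕ)
    (hd : ∀ i j, (p i j).natDegree ≤ d) (b : Fin r → ℕ → ℂ) (i : Fin r) :
    ∑ j, (Polynomial.aeval S (p i j) : H →L[ℂ] H) (∑ n ∈ range N, b j n • (e n : H))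
      = ∑ m ∈ range (N + d),
          (∑ j, ∑ n ∈ range N, ∑ k ∈ range (d + 1),
            if n + k = m then b j n * ((p i j).coeff k * ∏ t ∈ range k, (γ (n + t) : ℂ))
            else 0) • (e m : H) := by
  have step1 : ∑ j, (Polynomial.aeval S (p i j) : H →L[ℂ] H) (∑ n ∈ range N, b j n • (e n : H))
      = ∑ j, ∑ n ∈ range N, ∑ k ∈ range (d + 1),
          ∑ m ∈ range (N + d),
            (if n + k = m then b j n * ((p i j).coeff k * ∏ t ∈ range k, (γ (n + t) : ℂ))
             else 0) • (e m : H) := by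
    refine Finset.sum_congr rfl fun j _ => ?_
    rw [map_sum]
    refine Finset.sum_congr rfl fun n hn => ?_
    rw [map_smul, aeval_apply_basis e S γ hS (p i j) d (hd i j) n, Finset.smul_sum]
    refine Finset.sum_congr rfl fun k hk => ?_
    rw [smul_smul]
    have hmem : n + k ∈ range (N + d) := by
      rw [mem_range] at hn hk ⊢; omega
    rw [show (∑ m ∈ range (N + d),
        (if n + k = m then b j n * ((p i j).coeff k * ∏ t ∈ range k, (γ (n + t) : ℂ))
         else 0) • (e m : H))
      = ∑ m ∈ range (N + d),
        (if n + k = m then (b j n * ((p i j).coeff k * ∏ t ∈ range k, (γ (n + t) : ℂ))) • (e m : H)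
         else 0) from Finset.sum_congr rfl fun m _ => by rw [ite_smul, zero_smul]]
    rw [Finset.sum_ite_eq (range (N + d)) (n + k), if_pos hmem]
  rw [step1, (sum_comm4 (range (N + d)) univ (range N) (range (d + 1)) _).symm]
  refine Finset.sum_congr rfl fun m _ => ?_
  simp only [Finset.sum_smul]

end Hilb2

/-- The unimodular factor with real part `c t`. -/
def zeta (c : ℕ → ℝ) (t : ℕ) : ℂ :=
  (c t : ℂ) + (Real.sqrt (1 - c t ^ 2) : ℝ) * Complex.I

def wfun (M : ℕ) (c : ℕ → ℝ) (ε : Fin M → Bool) (t : ℕ) : ℂ :=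
  if h : t < M then (if ε ⟨t, h⟩ then zeta c t else conj' (zeta c t)) else 1

def ufun (M : ℕ) (c : ℕ → ℝ) (ε : Fin M → Bool) (n : ℕ) : ℂ :=
  ∏ t ∈ range n, wfun M c ε t

section Avg

variable (M : ℕ) (c : ℕ → ℝ) (hc0 : ∀ t, 0 < c t) (hc1 : ∀ t, c t ≤ 1)
include hc0 hc1

lemma zeta_norm : ∀ t, ‖zeta c t‖ = 1 := by
  intro t
  have h1 : (0 : ℝ) ≤ 1 - c t ^ 2 := by nlinarith [hc0 t, hc1 t]
  have h2 : Complex.normSq (zeta c t) = 1 := by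
    rw [zeta, Complex.normSq_add_mul_I, Real.sq_sqrt h1]; ring
  have h3 := Complex.sq_norm (zeta c t)
  rw [h2] at h3
  nlinarith [norm_nonneg (zeta c t)]

lemma wfun_norm : ∀ ε t, ‖wfun M c ε t‖ = 1 := by
  intro ε t
  rw [wfun]
  split
  · split
    · exact zeta_norm c hc0 hc1 t
    · rw [RCLike.norm_conj]; exact zeta_norm c hc0 hc1 t
  · simp

lemma ufun_norm : ∀ ε n, ‖ufun M c ε n‖ = 1 := by
  intro ε n
  rw [ufun, norm_prod]
  exact Finset.prod_eq_one fun t _ => wfun_norm M c hc0 hc1 ε t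

lemma ufun_avg (n m : ℕ) (hnm : n ≤ m) (hmM : m ≤ M) :
    ∑ ε : Fin M → Bool, ufun M c ε m * conj' (ufun M c ε n)
      = (2 ^ M : ℂ) * ∏ t ∈ Ico n m, (c t : ℂ) := by
  classical
  have hmul1 : ∀ ε, ufun M c ε n * conj' (ufun M c ε n) = 1 := by
    intro ε
    rw [Complex.mul_conj, Complex.normSq_eq_norm_sq,
      ufun_norm M c hc0 hc1 ε n]
    norm_num
  have key1 : ∀ ε, ufun M c ε m * conj' (ufun M c ε n) = ∏ t ∈ Ico n m, wfun M c ε t := by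
    intro ε
    have hsplit : ufun M c ε m = ufun M c ε n * ∏ t ∈ Ico n m, wfun M c ε t := by
      rw [ufun, ufun, Finset.range_eq_Ico, Finset.range_eq_Ico]
      exact (Finset.prod_Ico_consecutive _ (Nat.zero_le n) hnm).symm
    rw [hsplit]
    calc (ufun M c ε n * ∏ t ∈ Ico n m, wfun M c ε t) * conj' (ufun M c ε n)
        = (ufun M c ε n * conj' (ufun M c ε n)) * ∏ t ∈ Ico n m, wfun M c ε t := by ring
      _ = ∏ t ∈ Ico n m, wfun M c ε t := by rw [hmul1, one_mul]
  have hsub : Ico n m ⊆ range M := fun x hx =>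
    mem_range.mpr (lt_of_lt_of_le (mem_Ico.mp hx).2 hmM)
  have key2 : ∀ (v : ℕ → ℂ), ∏ t ∈ Ico n m, v t
      = ∏ t : Fin M, (if (t : ℕ) ∈ Ico n m then v (t : ℕ) else 1) := by
    intro v
    rw [Fin.prod_univ_eq_prod_range (fun t => if t ∈ Ico n m then v t else 1) M,
      Finset.prod_ite_mem (range M) (Ico n m) v, Finset.inter_eq_right.mpr hsub]
  have key3 : ∀ ε (t : Fin M), wfun M c ε (t : ℕ)
      = if ε t then zeta c (t : ℕ) else conj' (zeta c (t : ℕ)) := by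
    intro ε t
    rw [wfun, dif_pos t.isLt]
  calc ∑ ε : Fin M → Bool, ufun M c ε m * conj' (ufun M c ε n)
      = ∑ ε : Fin M → Bool, ∏ t : Fin M,
          (if (t : ℕ) ∈ Ico n m then (if ε t then zeta c (t : ℕ) else conj' (zeta c (t : ℕ)))
           else 1) := by
        refine Finset.sum_congr rfl fun ε _ => ?_
        rw [key1 ε, key2 (wfun M c ε)]
        refine Finset.prod_congr rfl fun t _ => ?_
        rw [key3 ε t]
    _ = ∏ t : Fin M, ∑ b : Bool,
          (if (t : ℕ) ∈ Ico n m then (if b then zeta c (t : ℕ) else conj' (zeta c (t : ℕ)))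
           else 1) := by
        rw [Fintype.prod_sum]
    _ = ∏ t : Fin M, (2 * if (t : ℕ) ∈ Ico n m then (c (t : ℕ) : ℂ) else 1) := by
        refine Finset.prod_congr rfl fun t _ => ?_
        rw [Fintype.sum_bool]
        split
        · rw [if_pos, if_neg (by simp)]
          · have : zeta c (t : ℕ) + conj' (zeta c (t : ℕ)) = 2 * (c (t : ℕ) : ℂ) := by
              rw [Complex.add_conj]
              norm_cast
              rw [zeta]
              simp
            simpa using this
          · simp
        · norm_num
    _ = (2 ^ M : ℂ) * ∏ t ∈ Ico n m, (c t : ℂ) := by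
        rw [Finset.prod_mul_distrib, Finset.prod_const, ← key2 (fun t => (c t : ℂ))]
        simp [Fintype.card_fin]

end Avg

section Core

variable {H : Type*} [NormedAddCommGroup H] [InnerProductSpace ℂ H] [CompleteSpace H]

lemma core (e : HilbertBasis ℕ ℂ H) (S₁ S₂ : H →L[ℂ] H) (α β : ℕ → ℝ)
    (hα : ∀ n, 0 < α n) (hβ : ∀ n, 0 < β n)
    (hS₁ : ∀ n : ℕ, S₁ (e n) = (α n : ℂ) • e (n + 1))
    (hS₂ : ∀ n : ℕ, S₂ (e n) = (β n : ℂ) • e (n + 1))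
    (hdom : ∀ n : ℕ, β n ≤ α n)
    (r : ℕ) (p : Fin r → Fin r → Polynomial ℂ) (C : ℝ) (hC : 0 ≤ C)
    (hyp : ∀ f : Fin r → H,
      ∑ i : Fin r, ‖∑ j : Fin r, (Polynomial.aeval S₁ (p i j) : H →L[ℂ] H) (f j)‖ ^ 2 ≤
        C ^ 2 * ∑ i : Fin r, ‖f i‖ ^ 2)
    (N : ℕ) (a : Fin r → ℕ → ℂ) :
    ∑ i : Fin r,
        ‖∑ j : Fin r, (Polynomial.aeval S₂ (p i j) : H →L[ℂ] H)
            (∑ n ∈ range N, a j n • (e n : H))‖ ^ 2 ≤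
      C ^ 2 * ∑ i : Fin r, ‖∑ n ∈ range N, a i n • (e n : H)‖ ^ 2 := by
  classical
  set d := Finset.univ.sup (fun ij : Fin r × Fin r => (p ij.1 ij.2).natDegree) with hd_def
  have hd : ∀ i j, (p i j).natDegree ≤ d := fun i j => Finset.le_sup (f := fun ij : Fin r × Fin r => (p ij.1 ij.2).natDegree) (mem_univ (i, j))
  set M := N + d with hM_def
  set c : ℕ → ℝ := fun t => β t / α t with hc_def
  have hc0 : ∀ t, 0 < c t := fun t => div_pos (hβ t) (hα t)
  have hc1 : ∀ t, c t ≤ 1 := fun t => (div_le_one (hα t)).mpr (hdom t)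
  have hβα : ∀ t, (β t : ℂ) = (α t : ℂ) * (c t : ℂ) := by
    intro t
    have : β t = α t * c t := by
      rw [hc_def, mul_comm]
      exact (div_mul_cancel₀ (β t) (ne_of_gt (hα t))).symm
    exact_mod_cast congrArg (Complex.ofReal) this
  set QQ : (ℕ → ℝ) → (Fin r → ℕ → ℂ) → Fin r → ℕ → ℂ :=
    fun γ b i m => ∑ j, ∑ n ∈ range N, ∑ k ∈ range (d + 1),
        if n + k = m then b j n * ((p i j).coeff k * ∏ t ∈ range k, (γ (n + t) : ℂ))
        else 0 with hQQ
  have E : ∀ (S : H →L[ℂ] H) (γ : ℕ → ℝ), (∀ n : ℕ, S (e n) = (γ n : ℂ) • e (n + 1)) →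
      ∀ (b : Fin r → ℕ → ℂ) (i : Fin r),
      ∑ j, (Polynomial.aeval S (p i j) : H →L[ℂ] H) (∑ n ∈ range N, b j n • (e n : H))
        = ∑ m ∈ range M, QQ γ b i m • (e m : H) :=
    fun S γ hS b i => expand e S γ hS p N d hd b i
  set u := ufun M c with hu_def
  have hun : ∀ ε n, ‖u ε n‖ = 1 := fun ε n => ufun_norm M c hc0 hc1 ε n
  set b : (Fin M → Bool) → Fin r → ℕ → ℂ := fun ε j n => conj' (u ε n) * a j n with hb
  -- the averaging identity for coefficients
  have hQav : ∀ (i : Fin r) (m : ℕ), m ∈ range M →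
      QQ β a i m = (2 ^ M : ℂ)⁻¹ * ∑ ε : Fin M → Bool, u ε m * QQ α (b ε) i m := by
    intro i m hm
    have hswap : ∑ ε : Fin M → Bool, u ε m * QQ α (b ε) i m
        = ∑ j, ∑ n ∈ range N, ∑ k ∈ range (d + 1), ∑ ε : Fin M → Bool,
            u ε m * (if n + k = m then b ε j n * ((p i j).coeff k * ∏ t ∈ range k, (α (n + t) : ℂ))
              else 0) := by
      rw [← sum_comm4 univ univ (range N) (range (d + 1))]
      refine Finset.sum_congr rfl fun ε _ => ?_
      rw [hQQ]
      simp only [Finset.mul_sum]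
    rw [hQQ]
    simp only []
    rw [hswap, Finset.mul_sum]
    refine Finset.sum_congr rfl fun j _ => ?_
    rw [Finset.mul_sum]
    refine Finset.sum_congr rfl fun n hn => ?_
    rw [Finset.mul_sum]
    refine Finset.sum_congr rfl fun k hk => ?_
    by_cases h : n + k = m
    · rw [if_pos h]
      have havg : ∑ ε : Fin M → Bool, u ε m * conj' (u ε n)
          = (2 ^ M : ℂ) * ∏ t ∈ Ico n m, (c t : ℂ) := by
        rw [hu_def]
        exact ufun_avg M c hc0 hc1 n m (by omega) (mem_range.mp hm).le
      have hsum : ∑ ε : Fin M → Bool,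
          u ε m * (if n + k = m then b ε j n * ((p i j).coeff k * ∏ t ∈ range k, (α (n + t) : ℂ))
            else 0)
          = ((2 ^ M : ℂ) * ∏ t ∈ Ico n m, (c t : ℂ)) *
              (a j n * ((p i j).coeff k * ∏ t ∈ range k, (α (n + t) : ℂ))) := by
        rw [← havg, Finset.sum_mul]
        refine Finset.sum_congr rfl fun ε _ => ?_
        rw [if_pos h, hb]
        ring
      rw [hsum]
      have hprodc : ∏ t ∈ Ico n m, (c t : ℂ) = ∏ t ∈ range k, (c (n + t) : ℂ) := by
        rw [Finset.prod_Ico_eq_prod_range]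
        subst h
        simp
      have hB : (p i j).coeff k * ∏ t ∈ range k, (β (n + t) : ℂ)
          = (∏ t ∈ Ico n m, (c t : ℂ)) * ((p i j).coeff k * ∏ t ∈ range k, (α (n + t) : ℂ)) := by
        rw [hprodc]
        rw [show ∏ t ∈ range k, (β (n + t) : ℂ)
            = ∏ t ∈ range k, ((α (n + t) : ℂ) * (c (n + t) : ℂ)) from
          Finset.prod_congr rfl fun t _ => hβα (n + t)]
        rw [Finset.prod_mul_distrib]
        ring
      rw [hB]
      have h2M : (2 ^ M : ℂ) ≠ 0 := pow_ne_zero _ two_ne_zero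
      field_simp
    · rw [if_neg h]
      have : ∀ ε : Fin M → Bool,
          u ε m * (if n + k = m then b ε j n * ((p i j).coeff k * ∏ t ∈ range k, (α (n + t) : ℂ))
            else 0) = 0 := by
        intro ε; rw [if_neg h, mul_zero]
      rw [Finset.sum_congr rfl fun ε _ => this ε, Finset.sum_const, smul_zero, mul_zero]
  -- the vectors
  set g : (Fin M → Bool) → Fin r → H := fun ε j => ∑ n ∈ range N, b ε j n • (e n : H) with hg
  have hgnorm : ∀ ε j, ‖g ε j‖ ^ 2 = ‖∑ n ∈ range N, a j n • (e n : H)‖ ^ 2 := by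
    intro ε j
    rw [hg]
    simp only []
    rw [norm_sum_sq e (range N) (fun n => b ε j n), norm_sum_sq e (range N) (fun n => a j n)]
    refine Finset.sum_congr rfl fun n _ => ?_
    rw [hb]
    simp only []
    rw [norm_mul, RCLike.norm_conj, hun, one_mul]
  have hWnorm : ∀ ε (i : Fin r),
      ‖∑ m ∈ range M, (u ε m * QQ α (b ε) i m) • (e m : H)‖ ^ 2
        = ‖∑ m ∈ range M, QQ α (b ε) i m • (e m : H)‖ ^ 2 := by
    intro ε i
    rw [norm_sum_sq e (range M) (fun m => u ε m * QQ α (b ε) i m),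
      norm_sum_sq e (range M) (fun m => QQ α (b ε) i m)]
    refine Finset.sum_congr rfl fun m _ => ?_
    rw [norm_mul, hun, one_mul]
  have hVi : ∀ i : Fin r, ∑ m ∈ range M, QQ β a i m • (e m : H)
      = (2 ^ M : ℂ)⁻¹ •
          ∑ ε : Fin M → Bool, ∑ m ∈ range M, (u ε m * QQ α (b ε) i m) • (e m : H) := by
    intro i
    conv_rhs => rw [Finset.sum_comm]
    rw [Finset.smul_sum]
    refine Finset.sum_congr rfl fun m hm => ?_
    rw [← Finset.sum_smul, smul_smul, ← hQav i m hm]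
  -- assembly in PiLp
  set X : PiLp 2 (fun _ : Fin r => H) := WithLp.toLp 2 (fun i => ∑ m ∈ range M, QQ β a i m • (e m : H)) with hX
  set Y : (Fin M → Bool) → PiLp 2 (fun _ : Fin r => H) :=
    fun ε => WithLp.toLp 2 (fun i => ∑ m ∈ range M, (u ε m * QQ α (b ε) i m) • (e m : H)) with hY
  have hXY : X = (2 ^ M : ℂ)⁻¹ • ∑ ε : Fin M → Bool, Y ε := by
    ext i
    rw [hX]
    simp only [PiLp.toLp_apply]
    rw [hVi i, PiLp.smul_apply]
    congr 1
    rw [WithLp.ofLp_sum, Finset.sum_apply]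
  set T : ℝ := ∑ i : Fin r, ‖∑ n ∈ range N, a i n • (e n : H)‖ ^ 2 with hT
  have hT0 : 0 ≤ T := Finset.sum_nonneg fun i _ => sq_nonneg _
  have hYsq : ∀ ε, ‖Y ε‖ ^ 2 ≤ C ^ 2 * T := by
    intro ε
    rw [PiLp.norm_sq_eq_of_L2]
    calc ∑ i, ‖Y ε i‖ ^ 2
        = ∑ i, ‖∑ m ∈ range M, QQ α (b ε) i m • (e m : H)‖ ^ 2 :=
          Finset.sum_congr rfl fun i _ => hWnorm ε i
      _ = ∑ i, ‖∑ j, (Polynomial.aeval S₁ (p i j) : H →L[ℂ] H) (g ε j)‖ ^ 2 := by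
          refine Finset.sum_congr rfl fun i _ => ?_
          rw [← E S₁ α hS₁ (b ε) i]
      _ ≤ C ^ 2 * ∑ i, ‖g ε i‖ ^ 2 := hyp (g ε)
      _ = C ^ 2 * T := by
          rw [hT]; congr 1; exact Finset.sum_congr rfl fun i _ => hgnorm ε i
  have hYle : ∀ ε, ‖Y ε‖ ≤ C * Real.sqrt T := by
    intro ε
    have h2 : ‖Y ε‖ = Real.sqrt (‖Y ε‖ ^ 2) := (Real.sqrt_sq (norm_nonneg _)).symm
    rw [h2, show C * Real.sqrt T = Real.sqrt (C ^ 2 * T) by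
      rw [Real.sqrt_mul (sq_nonneg C), Real.sqrt_sq hC]]
    exact Real.sqrt_le_sqrt (hYsq ε)
  have hXle : ‖X‖ ≤ C * Real.sqrt T := by
    rw [hXY]
    calc ‖(2 ^ M : ℂ)⁻¹ • ∑ ε : Fin M → Bool, Y ε‖
        = ((2 : ℝ) ^ M)⁻¹ * ‖∑ ε : Fin M → Bool, Y ε‖ := by
          rw [norm_smul]
          congr 1
          rw [norm_inv]
          norm_num
      _ ≤ ((2 : ℝ) ^ M)⁻¹ * ∑ ε : Fin M → Bool, ‖Y ε‖ := by
          gcongr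
          exact norm_sum_le _ _
      _ ≤ ((2 : ℝ) ^ M)⁻¹ * ∑ _ε : Fin M → Bool, (C * Real.sqrt T) := by
          gcongr with ε
          exact hYle ε
      _ = C * Real.sqrt T := by
          rw [Finset.sum_const, Finset.card_univ, Fintype.card_fun, Fintype.card_bool,
            Fintype.card_fin, nsmul_eq_mul]
          push_cast
          field_simp
  calc ∑ i : Fin r,
      ‖∑ j : Fin r, (Polynomial.aeval S₂ (p i j) : H →L[ℂ] H)
          (∑ n ∈ range N, a j n • (e n : H))‖ ^ 2
      = ∑ i : Fin r, ‖X i‖ ^ 2 := by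
        refine Finset.sum_congr rfl fun i _ => ?_
        rw [hX]
        simp only [PiLp.toLp_apply]
        rw [E S₂ β hS₂ a i]
    _ = ‖X‖ ^ 2 := (PiLp.norm_sq_eq_of_L2 _ X).symm
    _ ≤ (C * Real.sqrt T) ^ 2 := by
        have := pow_le_pow_left₀ (norm_nonneg X) hXle 2
        exact this
    _ = C ^ 2 * T := by
        rw [mul_pow, Real.sq_sqrt hT0]

end Core

end KacnelsonAux

/-- Kacnelson-type domination for weighted shifts: if the weights
of the shift `S₂` are dominated by those of `S₁`, then `p(S₁) ↦ p(S₂)` is a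
(unital) complete contraction: every bound for a matrix of polynomials in `S₁`
is a bound for the same matrix of polynomials in `S₂`. -/
theorem weighted_shift_domination_completely_contractive
    {H : Type*} [NormedAddCommGroup H] [InnerProductSpace ℂ H] [CompleteSpace H]
    (e : HilbertBasis ℕ ℂ H) (S₁ S₂ : H →L[ℂ] H) (α β : ℕ → ℝ)
    (hα : ∀ n, 0 < α n) (hβ : ∀ n, 0 < β n)
    (hS₁ : ∀ n : ℕ, S₁ (e n) = (α n : ℂ) • e (n + 1))
    (hS₂ : ∀ n : ℕ, S₂ (e n) = (β n : ℂ) • e (n + 1))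
    (hdom : ∀ n : ℕ, β n ≤ α n) :
    ∀ (r : ℕ) (p : Fin r → Fin r → Polynomial ℂ) (C : ℝ), 0 ≤ C →
      (∀ f : Fin r → H,
        ∑ i : Fin r, ‖∑ j : Fin r, (Polynomial.aeval S₁ (p i j) : H →L[ℂ] H) (f j)‖ ^ 2 ≤
          C ^ 2 * ∑ i : Fin r, ‖f i‖ ^ 2) →
      ∀ f : Fin r → H,
        ∑ i : Fin r, ‖∑ j : Fin r, (Polynomial.aeval S₂ (p i j) : H →L[ℂ] H) (f j)‖ ^ 2 ≤
          C ^ 2 * ∑ i : Fin r, ‖f i‖ ^ 2 := by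
  intro r p C hC hyp f
  set K : Set (Fin r → H) := {f : Fin r → H |
    ∑ i : Fin r, ‖∑ j : Fin r, (Polynomial.aeval S₂ (p i j) : H →L[ℂ] H) (f j)‖ ^ 2 ≤
      C ^ 2 * ∑ i : Fin r, ‖f i‖ ^ 2} with hK
  have hcl : IsClosed K := by
    apply isClosed_le
    · apply continuous_finset_sum
      intro i _
      apply Continuous.pow
      apply Continuous.norm
      apply continuous_finset_sum
      intro j _
      exact (Polynomial.aeval S₂ (p i j) : H →L[ℂ] H).continuous.comp (continuous_apply j)
    · apply Continuous.mul continuous_const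
      apply continuous_finset_sum
      intro i _
      exact ((continuous_apply i).norm.pow 2)
  have hfK : f ∈ K := by
    have hclosure : f ∈ closure K := by
      apply mem_closure_of_tendsto
        (f := fun m : ℕ => (fun j : Fin r => ∑ n ∈ Finset.range m, e.repr (f j) n • (e n : H)))
        (b := Filter.atTop)
      · rw [tendsto_pi_nhds]
        intro j
        exact (e.hasSum_repr (f j)).tendsto_sum_nat
      · filter_upwards with m
        exact KacnelsonAux.core e S₁ S₂ α β hα hβ hS₁ hS₂ hdom r p C hC hyp m
          (fun j n => e.repr (f j) n)
    rwa [hcl.closure_eq] at hclosure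
  exact hfK

end
end

section
/- Let d ≥ 1 be an integer. For k ∈ ℕ₀ and α ∈ ℕ₀^d, define w_{k,α} > 0 by w_{k,α}² = d^d · (∏_{j=1}^{d} (α_j + k + 1)) / (∏_{j=1}^{d} (|α| + kd + j)), where |α| = α_1 + ⋯ + α_d. Then w_{k,α} ≤ w_{k,0} for all k ∈ ℕ₀ and all α ∈ ℕ₀^d. -/
/-- AM–GM with natural powers: `d^d * ∏ f ≤ (∑ f)^d`. -/
lemma amgm_pow (d : ℕ) (hd : 0 < d) (f : Fin d → ℝ) (hf : ∀ i, 0 ≤ f i) :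
    (d : ℝ) ^ d * ∏ i, f i ≤ (∑ i, f i) ^ d := by
  have hd' : (0 : ℝ) < d := by exact_mod_cast hd
  have h := Real.geom_mean_le_arith_mean (Finset.univ : Finset (Fin d))
    (fun _ => (1 : ℝ)) f (fun _ _ => zero_le_one)
    (by simp [hd']) (fun i _ => hf i)
  simp only [Real.rpow_one, one_mul, Finset.sum_const, Finset.card_univ,
    Fintype.card_fin, nsmul_eq_mul, mul_one] at h
  have P0 : (0 : ℝ) ≤ ∏ i, f i := Finset.prod_nonneg fun i _ => hf i
  have h2 := pow_le_pow_left₀ (Real.rpow_nonneg P0 _) h d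
  have h3 : ((∏ i, f i) ^ ((d : ℝ))⁻¹) ^ d = ∏ i, f i := by
    rw [← Real.rpow_natCast ((∏ i, f i) ^ ((d : ℝ))⁻¹) d, ← Real.rpow_mul P0,
      inv_mul_cancel₀ (ne_of_gt hd'), Real.rpow_one]
  rw [h3] at h2
  calc (d : ℝ) ^ d * ∏ i, f i ≤ (d : ℝ) ^ d * ((∑ i, f i) / d) ^ d :=
        mul_le_mul_of_nonneg_left h2 (by positivity)
    _ = (∑ i, f i) ^ d := by
        rw [div_pow, mul_div_cancel₀]
        positivity

/-- the weights
`w_{k,α}² = d^d·∏_j (α_j+k+1) / ∏_j (|α|+kd+j)` of the shift decomposition of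
`M_τ` on the Drury–Arveson space satisfy `w_{k,α} ≤ w_{k,0}`. -/
theorem shift_weights_le (d : ℕ) (hd : 1 ≤ d) (k : ℕ) (α : Fin d → ℕ) :
    Real.sqrt ((d : ℝ) ^ d * (∏ j : Fin d, ((α j : ℝ) + k + 1)) /
        ∏ j : Fin d, ((∑ i : Fin d, (α i : ℝ)) + k * d + ((j : ℕ) + 1))) ≤
      Real.sqrt ((d : ℝ) ^ d * ((k : ℝ) + 1) ^ d /
        ∏ j : Fin d, ((k : ℝ) * d + ((j : ℕ) + 1))) := by
  apply Real.sqrt_le_sqrt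
  set s : ℝ := ∑ i : Fin d, (α i : ℝ) with hs_def
  have hs : 0 ≤ s := Finset.sum_nonneg fun i _ => by positivity
  have hk : (0 : ℝ) ≤ k := Nat.cast_nonneg k
  have hd' : (1 : ℝ) ≤ d := by exact_mod_cast hd
  have hQ : (0 : ℝ) < ∏ j : Fin d, (s + k * d + ((j : ℕ) + 1)) :=
    Finset.prod_pos fun j _ => by positivity
  have hR : (0 : ℝ) < ∏ j : Fin d, ((k : ℝ) * d + ((j : ℕ) + 1)) :=
    Finset.prod_pos fun j _ => by positivity
  rw [div_le_div_iff₀ hQ hR]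
  -- AM–GM step: d^d * ∏ (α j + k + 1) ≤ (s + k*d + d)^d
  have hsum : (∑ j : Fin d, ((α j : ℝ) + k + 1)) = s + k * d + d := by
    rw [Finset.sum_add_distrib, Finset.sum_add_distrib]
    simp [mul_comm, hs_def]
  have hAM : (d : ℝ) ^ d * ∏ j : Fin d, ((α j : ℝ) + k + 1) ≤ (s + k * d + d) ^ d := by
    have := amgm_pow d (by omega) (fun j => (α j : ℝ) + k + 1) (fun j => by positivity)
    rwa [hsum] at this
  calc (d : ℝ) ^ d * (∏ j : Fin d, ((α j : ℝ) + k + 1)) *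
        ∏ j : Fin d, ((k : ℝ) * d + ((j : ℕ) + 1))
      ≤ (s + k * d + d) ^ d * ∏ j : Fin d, ((k : ℝ) * d + ((j : ℕ) + 1)) :=
        mul_le_mul_of_nonneg_right hAM (le_of_lt hR)
    _ = ∏ j : Fin d, ((s + k * d + d) * ((k : ℝ) * d + ((j : ℕ) + 1))) := by
        rw [Finset.prod_mul_distrib, Finset.prod_const, Finset.card_univ, Fintype.card_fin]
    _ ≤ ∏ j : Fin d, ((d : ℝ) * ((k : ℝ) + 1) * (s + k * d + ((j : ℕ) + 1))) := by
        apply Finset.prod_le_prod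
        · intro j _
          positivity
        · intro j _
          have hj : ((j : ℕ) : ℝ) + 1 ≤ d := by
            have := j.isLt
            exact_mod_cast Nat.succ_le_of_lt this
          have key : (d : ℝ) * ((k : ℝ) + 1) * (s + k * d + ((j : ℕ) + 1)) -
              (s + k * d + d) * ((k : ℝ) * d + ((j : ℕ) + 1)) =
              s * ((d : ℝ) - (((j : ℕ) : ℝ) + 1)) := by ring
          nlinarith [mul_nonneg hs (sub_nonneg.2 hj)]
    _ = (d : ℝ) ^ d * ((k : ℝ) + 1) ^ d *
          ∏ j : Fin d, (s + k * d + ((j : ℕ) + 1)) := by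
        rw [Finset.prod_mul_distrib, Finset.prod_mul_distrib, Finset.prod_const,
          Finset.prod_const, Finset.card_univ, Fintype.card_fin]
end
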